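/- arXiv:1510.07312 — 6 statements merged into one kernel-verified Lean document; each statement's English description precedes it below -/
import Mathlib

section
/- If x = (x_1,…,x_k) and y = (y_1,…,y_k) are two non-decreasing sequences of non-negative real numbers and z = (z_1,…,z_k) is a rearrangement (permutation) of y, then the product x_1^{z_1}·x_2^{z_2}⋯x_k^{z_k} is at most x_1^{y_1}·x_2^{y_2}⋯x_k^{y_k}, where 0^0 is interpreted as 1. -/
theorem stmt_3 (k : ℕ) (x y z : Fin k → ℝ)
    (hx0 : ∀ i, 0 ≤ x i) (hy0 : ∀ i, 0 ≤ y i)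
    (hxmono : Monotone x) (hymono : Monotone y)
    (π : Equiv.Perm (Fin k)) (hz : z = y ∘ π) :
    ∏ i, (x i) ^ (z i) ≤ ∏ i, (x i) ^ (y i) := by
  by_cases h : ∃ j, x j = 0 ∧ 0 < z j
  · obtain ⟨j, hxj, hzj⟩ := h
    have hL : ∏ i, (x i) ^ (z i) = 0 := by
      apply Finset.prod_eq_zero (Finset.mem_univ j)
      rw [hxj, Real.zero_rpow hzj.ne']
    rw [hL]
    exact Finset.prod_nonneg fun i _ => Real.rpow_nonneg (hx0 i) _
  · push_neg at h
    have hz0 : ∀ j, x j = 0 → z j = 0 := fun j hj =>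
      le_antisymm (h j hj) (by rw [hz]; exact hy0 _)
    -- y also vanishes where x vanishes
    have hy0' : ∀ j, x j = 0 → y j = 0 := by
      intro i hi
      by_contra hyi
      have hyi : 0 < y i := lt_of_le_of_ne (hy0 i) (Ne.symm hyi)
      -- counting argument
      have hsub1 : (Finset.univ.filter fun j => 0 < y j) ⊆
          (Finset.univ.filter fun j : Fin k => 0 < y (π j)).image π := by
        intro j hj
        simp only [Finset.mem_filter, Finset.mem_univ, true_and] at hj
        refine Finset.mem_image.2 ⟨π.symm j, ?_, by simp⟩
        simp [hj]
      have hsub2 : (Finset.univ.filter fun j : Fin k => 0 < y (π j)) ⊆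
          Finset.univ.filter fun j => 0 < x j := by
        intro j hj
        simp only [Finset.mem_filter, Finset.mem_univ, true_and] at hj ⊢
        rcases (hx0 j).lt_or_eq with hl | he
        · exact hl
        · exfalso
          have : 0 < z j := by rw [hz]; exact hj
          exact absurd (hz0 j he.symm) this.ne'
      have hc1 : (Finset.Ici i) ⊆ Finset.univ.filter fun j => 0 < y j := by
        intro j hj
        simp only [Finset.mem_Ici] at hj
        simp only [Finset.mem_filter, Finset.mem_univ, true_and]
        exact lt_of_lt_of_le hyi (hymono hj)
      have hc2 : (Finset.univ.filter fun j => 0 < x j) ⊆ (Finset.Iic i)ᶜ := by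
        intro j hj
        simp only [Finset.mem_filter, Finset.mem_univ, true_and] at hj
        simp only [Finset.mem_compl, Finset.mem_Iic]
        intro hji
        have : x j ≤ 0 := hi ▸ hxmono hji
        exact absurd (le_antisymm this (hx0 j)) hj.ne'
      have hcard : (Finset.Ici i).card ≤ ((Finset.Iic i)ᶜ).card := by
        calc (Finset.Ici i).card ≤ _ := Finset.card_le_card hc1
          _ ≤ _ := Finset.card_le_card hsub1
          _ ≤ (Finset.univ.filter fun j : Fin k => 0 < y (π j)).card :=
            Finset.card_image_le
          _ ≤ _ := Finset.card_le_card hsub2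
          _ ≤ _ := Finset.card_le_card hc2
      rw [Finset.card_compl, Fin.card_Ici, Fin.card_Iic, Fintype.card_fin] at hcard
      omega
    -- set up log-like function
    set C : ℝ := -(∑ j, |Real.log (x j)|) - 1 with hC
    set g : Fin k → ℝ := fun j => if x j = 0 then C else Real.log (x j) with hg
    have hClog : ∀ j, C ≤ Real.log (x j) := by
      intro j
      have h1 : |Real.log (x j)| ≤ ∑ j, |Real.log (x j)| :=
        Finset.single_le_sum (f := fun j => |Real.log (x j)|) (fun i _ => abs_nonneg _) (Finset.mem_univ j)
      have := neg_abs_le (Real.log (x j))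
      simp only [hC]; linarith
    have hgmono : Monotone g := by
      intro a b hab
      simp only [hg]
      by_cases ha : x a = 0
      · by_cases hb : x b = 0
        · simp [ha, hb]
        · simp only [ha, hb, if_true, if_false]
          exact hClog b
      · have hxa : 0 < x a := lt_of_le_of_ne (hx0 a) (Ne.symm ha)
        have hxb : 0 < x b := lt_of_lt_of_le hxa (hxmono hab)
        simp only [ha, hxb.ne', if_false]
        exact Real.log_le_log hxa (hxmono hab)
    have key : ∑ j, g j * y (π j) ≤ ∑ j, g j * y j :=
      (hgmono.monovary hymono).sum_smul_comp_perm_le_sum_smul (σ := π)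
    have hprod : ∀ w : Fin k → ℝ, (∀ j, x j = 0 → w j = 0) →
        ∏ j, (x j) ^ (w j) = Real.exp (∑ j, g j * w j) := by
      intro w hw
      rw [Real.exp_sum]
      apply Finset.prod_congr rfl
      intro j _
      by_cases hj : x j = 0
      · rw [hj, hw j hj, Real.rpow_zero, mul_zero, Real.exp_zero]
      · have hxj : 0 < x j := lt_of_le_of_ne (hx0 j) (Ne.symm hj)
        rw [Real.rpow_def_of_pos hxj]
        simp [hg, hj]
    rw [hprod z hz0, hprod y hy0']
    apply Real.exp_le_exp.2
    calc ∑ j, g j * z j = ∑ j, g j * y (π j) := by rw [hz]; rfl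
      _ ≤ _ := key
end

section
/- Let f : 𝔖 → ℝ be supported on permutations of length at most N₀, extended linearly, and for a permutation σ of length n and pattern τ of length m ≤ n let p(τ,σ) = Λ(τ,σ)/C(n,m), where Λ(τ,σ) counts the m-element index subsets of [n] inducing τ in σ. Then for every N ≥ N₀, max over σ ∈ 𝔖_{N+1} of p(f,σ) is at most max over σ ∈ 𝔖_N of p(f,σ). -/
open Finset

/-- Number of occurrences of the pattern `τ` in `σ`: the number of strictly
increasing index choices inducing the pattern `τ` (equivalently, the number of
`m`-element subsets of `[n]` inducing `τ`). -/
noncomputable def occurrences {m n : ℕ} (τ : Equiv.Perm (Fin m)) (σ : Equiv.Perm (Fin n)) : ℕ :=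
  Nat.card {e : Fin m → Fin n // StrictMono e ∧ ∀ i j : Fin m, τ i < τ j ↔ σ (e i) < σ (e j)}

/-- Pattern density `p(τ,σ)` (equal to `0` when `m > n`, since then `C(n,m) = 0`). -/
noncomputable def density {m n : ℕ} (τ : Equiv.Perm (Fin m)) (σ : Equiv.Perm (Fin n)) : ℝ :=
  (occurrences τ σ : ℝ) / (Nat.choose n m : ℝ)

/-- The permutation of `Fin n` obtained from `σ : Perm (Fin (n+1))` by deleting the
point `k` (pattern of `σ` on the complement of `{k}`). -/
noncomputable def delete {n : ℕ} (σ : Equiv.Perm (Fin (n + 1))) (k : Fin (n + 1)) :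
    Equiv.Perm (Fin n) :=
  Equiv.removeNone ((finSuccEquiv' k).symm.trans (σ.trans (finSuccEquiv' (σ k))))

lemma delete_spec {n : ℕ} (σ : Equiv.Perm (Fin (n + 1))) (k : Fin (n + 1)) (i : Fin n) :
    (σ k).succAbove (delete σ k i) = σ (k.succAbove i) := by
  set e := ((finSuccEquiv' k).symm.trans (σ.trans (finSuccEquiv' (σ k)))) with he
  have hne : σ (k.succAbove i) ≠ σ k := fun h => Fin.succAbove_ne k i (σ.injective h)
  obtain ⟨j, hj⟩ := Fin.exists_succAbove_eq hne
  have hes : e (some i) = some j := by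
    simp only [he, Equiv.trans_apply, finSuccEquiv'_symm_some, ← hj,
      finSuccEquiv'_succAbove]
  have := Equiv.removeNone_some e ⟨j, hes⟩
  rw [hes] at this
  have : delete σ k i = j := Option.some_injective _ this
  rw [this, hj]

lemma delete_lt_iff {n : ℕ} (σ : Equiv.Perm (Fin (n + 1))) (k : Fin (n + 1)) (i j : Fin n) :
    delete σ k i < delete σ k j ↔ σ (k.succAbove i) < σ (k.succAbove j) := by
  rw [← delete_spec σ k i, ← delete_spec σ k j, Fin.succAbove_lt_succAbove_iff]

open Classical in
lemma occurrences_eq_card {m n : ℕ} (τ : Equiv.Perm (Fin m)) (σ : Equiv.Perm (Fin n)) :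
    occurrences τ σ = (Finset.univ.filter
      (fun e : Fin m → Fin n => StrictMono e ∧
        ∀ i j : Fin m, τ i < τ j ↔ σ (e i) < σ (e j))).card := by
  rw [occurrences, Nat.card_eq_fintype_card, Fintype.card_subtype]

open Classical in
lemma sum_occurrences_delete {m n : ℕ} (τ : Equiv.Perm (Fin m))
    (σ : Equiv.Perm (Fin (n + 1))) :
    ∑ k : Fin (n + 1), occurrences τ (delete σ k) = (n + 1 - m) * occurrences τ σ := by
  have key : ∀ k : Fin (n + 1), occurrences τ (delete σ k) =
      (Finset.univ.filter (fun e : Fin m → Fin (n + 1) =>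
        (StrictMono e ∧ ∀ i j : Fin m, τ i < τ j ↔ σ (e i) < σ (e j)) ∧
          k ∉ Set.range e)).card := by
    intro k
    rw [occurrences_eq_card]
    apply Finset.card_bij (fun e _ => k.succAbove ∘ e)
    · intro e he
      simp only [Finset.mem_filter, Finset.mem_univ, true_and] at he ⊢
      refine ⟨⟨(Fin.strictMono_succAbove k).comp he.1, fun i j => ?_⟩, ?_⟩
      · rw [he.2 i j, delete_lt_iff]; rfl
      · rintro ⟨i, hi⟩
        exact Fin.succAbove_ne k (e i) hi
    · intro e₁ _ e₂ _ h
      funext i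
      exact (Fin.strictMono_succAbove k).injective (congrFun h i)
    · intro e he
      simp only [Finset.mem_filter, Finset.mem_univ, true_and] at he
      have hne : ∀ i, e i ≠ k := fun i hi => he.2 ⟨i, hi⟩
      choose e' he' using fun i => Fin.exists_succAbove_eq (hne i)
      refine ⟨e', ?_, funext fun i => (he' i)⟩
      simp only [Finset.mem_filter, Finset.mem_univ, true_and]
      constructor
      · intro i j hij
        have := he.1.1 hij
        rw [← he' i, ← he' j, Fin.succAbove_lt_succAbove_iff] at this
        exact this
      · intro i j
        rw [he.1.2 i j, delete_lt_iff, he' i, he' j]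
  calc ∑ k : Fin (n + 1), occurrences τ (delete σ k)
      = ∑ k : Fin (n + 1), ∑ e ∈ Finset.univ.filter (fun e : Fin m → Fin (n + 1) =>
          StrictMono e ∧ ∀ i j : Fin m, τ i < τ j ↔ σ (e i) < σ (e j)),
          (if k ∉ Set.range e then 1 else 0) := by
        refine Finset.sum_congr rfl fun k _ => ?_
        rw [key k, ← Finset.filter_filter, Finset.card_filter]
    _ = ∑ e ∈ Finset.univ.filter (fun e : Fin m → Fin (n + 1) =>
          StrictMono e ∧ ∀ i j : Fin m, τ i < τ j ↔ σ (e i) < σ (e j)),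
          ∑ k : Fin (n + 1), (if k ∉ Set.range e then 1 else 0) := Finset.sum_comm
    _ = ∑ e ∈ Finset.univ.filter (fun e : Fin m → Fin (n + 1) =>
          StrictMono e ∧ ∀ i j : Fin m, τ i < τ j ↔ σ (e i) < σ (e j)), (n + 1 - m) := by
        refine Finset.sum_congr rfl fun e he => ?_
        simp only [Finset.mem_filter, Finset.mem_univ, true_and] at he
        rw [← Finset.card_filter]
        have : Finset.univ.filter (fun k : Fin (n + 1) => k ∉ Set.range e) =
            (Finset.univ.image e)ᶜ := by
          ext k; simp [Set.mem_range, eq_comm]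
        rw [this, Finset.card_compl, Finset.card_image_of_injective _ he.1.injective]
        simp
    _ = (n + 1 - m) * occurrences τ σ := by
        rw [Finset.sum_const, smul_eq_mul, ← occurrences_eq_card, mul_comm]

lemma density_avg {m n : ℕ} (hm : m ≤ n) (τ : Equiv.Perm (Fin m))
    (σ : Equiv.Perm (Fin (n + 1))) :
    density τ σ = (∑ k : Fin (n + 1), density τ (delete σ k)) / (n + 1) := by
  unfold density
  rw [← Finset.sum_div]
  rw [← Nat.cast_sum, sum_occurrences_delete]
  have hchoose : (n.choose m : ℝ) ≠ 0 :=
    Nat.cast_ne_zero.mpr (Nat.choose_pos hm).ne'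
  have hchoose' : ((n + 1).choose m : ℝ) ≠ 0 :=
    Nat.cast_ne_zero.mpr (Nat.choose_pos (hm.trans n.le_succ)).ne'
  have hid : (n.choose m : ℝ) * (n + 1) = ((n + 1).choose m : ℝ) * (n + 1 - m : ℕ) := by
    exact_mod_cast congrArg (Nat.cast : ℕ → ℝ) (Nat.choose_mul_succ_eq n m)
  have hsub : (0 : ℝ) < (n + 1 - m : ℕ) := by
    have : 0 < n + 1 - m := by omega
    exact_mod_cast this
  field_simp
  rw [Nat.cast_mul]
  linear_combination (occurrences τ σ : ℝ) * hid

theorem stmt_5 (N₀ : ℕ) (K : ℕ) (c : Fin K → ℝ) (m : Fin K → ℕ)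
    (τ : ∀ i : Fin K, Equiv.Perm (Fin (m i))) (hm : ∀ i, m i ≤ N₀)
    (N : ℕ) (hN : N₀ ≤ N) :
    (Finset.univ : Finset (Equiv.Perm (Fin (N + 1)))).sup'
        Finset.univ_nonempty (fun σ => ∑ i, c i * density (τ i) σ) ≤
      (Finset.univ : Finset (Equiv.Perm (Fin N))).sup'
        Finset.univ_nonempty (fun σ => ∑ i, c i * density (τ i) σ) := by
  apply Finset.sup'_le
  intro σ _
  set M := (Finset.univ : Finset (Equiv.Perm (Fin N))).sup'
      Finset.univ_nonempty (fun σ => ∑ i, c i * density (τ i) σ) with hM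
  have havg : ∑ i, c i * density (τ i) σ =
      (∑ k : Fin (N + 1), ∑ i, c i * density (τ i) (delete σ k)) / (N + 1) := by
    rw [Finset.sum_comm]
    rw [Finset.sum_div]
    refine Finset.sum_congr rfl fun i _ => ?_
    rw [density_avg ((hm i).trans hN) (τ i) σ]
    rw [← mul_div_assoc, Finset.mul_sum]
  rw [havg]
  have hb : ∀ k : Fin (N + 1), ∑ i, c i * density (τ i) (delete σ k) ≤ M :=
    fun k => Finset.le_sup' (fun σ : Equiv.Perm (Fin N) => ∑ i, c i * density (τ i) σ)
      (Finset.mem_univ (delete σ k))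
  have hsum : ∑ k : Fin (N + 1), ∑ i, c i * density (τ i) (delete σ k) ≤ (N + 1) * M := by
    calc _ ≤ ∑ _k : Fin (N + 1), M := Finset.sum_le_sum fun k _ => hb k
    _ = (N + 1) * M := by simp [Finset.sum_const, mul_comm]
  rw [div_le_iff₀ (by positivity)]
  linarith [hsum]
end

section
/- Let k ≥ ℓ ≥ 3 be integers and N ≥ ℓ. Define q_N(x_1,…,x_N) = ℓ!·Σ_{I ⊆ [N], |I|=ℓ} Π_{i∈I} x_i + Σ_{i=1}^N x_i^k. If x_1 ≤ x_2 ≤ ⋯ ≤ x_N are non-negative reals summing to 1, then q_N(x_1,x_2,…,x_N) ≥ q_{N-1}(x_1+x_2, x_3,…,x_N). -/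
open Finset


lemma my_prod_nonneg (s : Multiset ℝ) (h : ∀ a ∈ s, 0 ≤ a) : 0 ≤ s.prod := by
  induction s using Multiset.induction with
  | empty => simp
  | cons a s ih =>
    rw [Multiset.prod_cons]
    exact mul_nonneg (h a (Multiset.mem_cons_self a s))
      (ih fun b hb => h b (Multiset.mem_cons_of_mem hb))

lemma my_pow_le_prod (b : ℝ) (hb : 0 ≤ b) (s : Multiset ℝ) (h : ∀ a ∈ s, b ≤ a) :
    b ^ Multiset.card s ≤ s.prod := by
  induction s using Multiset.induction with
  | empty => simp
  | cons a s ih =>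
    rw [Multiset.prod_cons, Multiset.card_cons, pow_succ']
    exact mul_le_mul (h a (Multiset.mem_cons_self a s))
      (ih fun c hc => h c (Multiset.mem_cons_of_mem hc)) (pow_nonneg hb _)
      (hb.trans (h a (Multiset.mem_cons_self a s)))

lemma my_esymm_nonneg (s : Multiset ℝ) (h : ∀ a ∈ s, 0 ≤ a) (j : ℕ) : 0 ≤ s.esymm j := by
  apply Multiset.sum_nonneg
  intro r hr
  rw [Multiset.mem_map] at hr
  obtain ⟨t, ht, rfl⟩ := hr
  rw [Multiset.mem_powersetCard] at ht
  exact my_prod_nonneg t fun a ha => h a (Multiset.mem_of_le ht.1 ha)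

lemma my_esymm_ge (s : Multiset ℝ) (b : ℝ) (hb : 0 ≤ b) (h : ∀ a ∈ s, b ≤ a) (j : ℕ)
    (hj : j ≤ Multiset.card s) : b ^ j ≤ s.esymm j := by
  have hpos : 0 < Multiset.card (s.powersetCard j) := by
    rw [Multiset.card_powersetCard]
    exact Nat.choose_pos hj
  obtain ⟨t, ht⟩ := Multiset.card_pos_iff_exists_mem.mp hpos
  have ht' := Multiset.mem_powersetCard.mp ht
  have h1 : b ^ j ≤ t.prod := by
    rw [← ht'.2]
    exact my_pow_le_prod b hb t fun a ha => h a (Multiset.mem_of_le ht'.1 ha)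
  refine h1.trans (Multiset.single_le_sum ?_ t.prod (Multiset.mem_map_of_mem _ ht))
  intro r hr
  rw [Multiset.mem_map] at hr
  obtain ⟨u, hu, rfl⟩ := hr
  exact my_prod_nonneg u fun a ha =>
    (hb.trans (h a (Multiset.mem_of_le (Multiset.mem_powersetCard.mp hu).1 ha)))

lemma my_esymm_cons (a : ℝ) (s : Multiset ℝ) (j : ℕ) :
    (a ::ₘ s).esymm (j+1) = a * s.esymm j + s.esymm (j+1) := by
  simp only [Multiset.esymm, Multiset.powersetCard_cons, Multiset.map_add, Multiset.sum_add,
    Multiset.map_map, Function.comp_def, Multiset.prod_cons]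
  rw [Multiset.sum_map_mul_left]
  ring

lemma my_esymm_one (s : Multiset ℝ) : s.esymm 1 = s.sum := by
  simp [Multiset.esymm, Multiset.powersetCard_one, Multiset.map_map, Function.comp_def]


lemma map_univ_succ {p : ℕ} (f : Fin (p+1) → ℝ) :
    Multiset.map f (univ : Finset (Fin (p+1))).val
      = f 0 ::ₘ Multiset.map (fun i => f i.succ) (univ : Finset (Fin p)).val := by
  rw [Fin.univ_succ, Finset.cons_val, Multiset.map_cons, Finset.map_val, Multiset.map_map]
  rfl


lemma binom_bound (r : ℕ) (a b : ℝ) (ha : 0 ≤ a) (hb : 0 ≤ b) :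
    (a+b)^(r+2) ≤ a^(r+2) + b^(r+2) + ((r:ℝ)+2) * a * b * (a+b)^r := by
  induction r with
  | zero => push_cast; nlinarith [sq_nonneg (a+b)]
  | succ r ih =>
    have h2 : a^(r+1) + b^(r+1) ≤ (a+b)^(r+1) := pow_add_pow_le ha hb (Nat.succ_ne_zero r)
    have hab : (0:ℝ) ≤ a + b := by linarith
    have h3 : a*b*(a^(r+1)+b^(r+1)) ≤ a*b*(a+b)^(r+1) :=
      mul_le_mul_of_nonneg_left h2 (mul_nonneg ha hb)
    calc (a+b)^(r+1+2) = (a+b) * (a+b)^(r+2) := by ring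
      _ ≤ (a+b) * (a^(r+2) + b^(r+2) + ((r:ℝ)+2)*a*b*(a+b)^r) :=
          mul_le_mul_of_nonneg_left ih hab
      _ = a^(r+3) + b^(r+3) + a*b*(a^(r+1)+b^(r+1)) + ((r:ℝ)+2)*a*b*(a+b)^(r+1) := by ring
      _ ≤ a^(r+3) + b^(r+3) + a*b*(a+b)^(r+1) + ((r:ℝ)+2)*a*b*(a+b)^(r+1) := by linarith
      _ = a^(r+1+2) + b^(r+1+2) + ((((r:ℕ)+1:ℕ):ℝ)+2)*a*b*(a+b)^(r+1) := by push_cast; ring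

lemma mono_bound (j : ℕ) (t : ℝ) (ht0 : 0 ≤ t) (ht : t ≤ 2/3) :
    ∀ r, j ≤ r → ((r:ℝ)+2) * t^r ≤ ((j:ℝ)+2) * t^j := by
  intro r hr
  induction r, hr using Nat.le_induction with
  | base => exact le_refl _
  | succ r hr ih =>
    have hr0 : (0:ℝ) ≤ (r:ℝ) := Nat.cast_nonneg r
    have h1 : ((r:ℝ)+3) * t ≤ (r:ℝ)+2 := by nlinarith
    have h2 : ((r:ℝ)+3) * t^(r+1) ≤ ((r:ℝ)+2) * t^r := by
      calc ((r:ℝ)+3)*t^(r+1) = (((r:ℝ)+3)*t)*t^r := by ring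
        _ ≤ ((r:ℝ)+2)*t^r := mul_le_mul_of_nonneg_right h1 (pow_nonneg ht0 r)
    push_cast
    push_cast at ih
    linarith

lemma two_pow_le_fact (j : ℕ) (hj : 2 ≤ j) : 2^j ≤ Nat.factorial (j+1) := by
  induction j, hj using Nat.le_induction with
  | base => decide
  | succ j hj ih =>
    rw [pow_succ, Nat.factorial_succ]
    calc 2^j * 2 ≤ Nat.factorial (j+1) * 2 := Nat.mul_le_mul_right 2 ih
      _ ≤ (j+1+1) * Nat.factorial (j+1) := by nlinarith

/-- The Price polynomial of `Id_ℓ + Rev_k` in `M` variables. -/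
noncomputable def pricePoly (ℓ k M : ℕ) (x : Fin M → ℝ) : ℝ :=
  (Nat.factorial ℓ : ℝ) *
      ∑ I ∈ (Finset.univ : Finset (Fin M)).powersetCard ℓ, ∏ i ∈ I, x i +
    ∑ i, (x i) ^ k

theorem stmt_8 (ℓ k n : ℕ) (hℓ : 3 ≤ ℓ) (hk : ℓ ≤ k) (hN : ℓ ≤ n + 1)
    (x : Fin (n + 1) → ℝ) (hmono : Monotone x) (hx0 : ∀ i, 0 ≤ x i)
    (hsum : (∑ i, x i) = 1) :
    pricePoly ℓ k (n + 1) x ≥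
      pricePoly ℓ k n (fun i => if (i : ℕ) = 0 then x 0 + x 1 else x i.succ) := by
  obtain ⟨m, rfl⟩ : ∃ m, n = m + 2 := ⟨n - 2, by omega⟩
  obtain ⟨j, rfl⟩ : ∃ j, ℓ = j + 2 := ⟨ℓ - 2, by omega⟩
  obtain ⟨r, rfl⟩ : ∃ r, k = r + 2 := ⟨k - 2, by omega⟩
  have hj1 : 1 ≤ j := by omega
  have hjr : j ≤ r := by omega
  set y : Fin (m + 2) → ℝ := fun i => if (i : ℕ) = 0 then x 0 + x 1 else x i.succ with hy
  set a := x 0 with hadef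
  set b := x 1 with hbdef
  set M : Multiset ℝ :=
    Multiset.map (fun i : Fin (m+1) => x i.succ.succ) (univ : Finset (Fin (m+1))).val with hM
  have ha : 0 ≤ a := hx0 0
  have hb : 0 ≤ b := hx0 1
  have hab : a ≤ b := hmono (Fin.zero_le 1)
  have hMx : Multiset.map x (univ : Finset (Fin (m+3))).val = a ::ₘ b ::ₘ M := by
    rw [map_univ_succ, map_univ_succ]
    rfl
  have hMy : Multiset.map y (univ : Finset (Fin (m+2))).val = (a + b) ::ₘ M := by
    rw [map_univ_succ]
    congr 1
  -- facts about M
  have hcard : Multiset.card M = m + 1 := by simp [hM]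
  have hbel : ∀ c ∈ M, b ≤ c := by
    intro c hc
    rw [hM, Multiset.mem_map] at hc
    obtain ⟨i, _, rfl⟩ := hc
    exact hmono (by simp [Fin.le_def])
  have hMnn : ∀ c ∈ M, 0 ≤ c := fun c hc => hb.trans (hbel c hc)
  have hMsum : a + b + M.sum = 1 := by
    rw [← hsum, Fin.sum_univ_succ, Fin.sum_univ_succ]
    have h1 : M.sum = ∑ i : Fin (m+1), x i.succ.succ := by rw [hM]; rfl
    rw [h1, Fin.succ_zero_eq_one, ← hbdef]; ring
  have hMsumb : ((m:ℝ)+1) * b ≤ M.sum := by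
    have := Multiset.card_nsmul_le_sum hbel
    rwa [hcard, nsmul_eq_mul, Nat.cast_add, Nat.cast_one] at this
  have ht0 : 0 ≤ a + b := by linarith
  have ht23 : a + b ≤ 2/3 := by nlinarith [mul_nonneg (Nat.cast_nonneg m : (0:ℝ) ≤ m) hb]
  -- elementary symmetric facts
  have hEnn : ∀ i, 0 ≤ M.esymm i := fun i => my_esymm_nonneg M hMnn i
  -- the key inequality
  have key : ((r:ℝ)+2) * (a+b)^r ≤ (Nat.factorial (j+2) : ℝ) * M.esymm j := by
    rcases eq_or_lt_of_le hj1 with hj | hj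
    · -- j = 1, ℓ = 3
      rw [← hj, my_esymm_one]
      have h1 : ((r:ℝ)+2) * (a+b)^r ≤ ((1:ℕ):ℝ)*(a+b)^(1:ℕ) + 2*(a+b)^(1:ℕ) := by
        have := mono_bound 1 (a+b) ht0 ht23 r (by omega)
        push_cast at this ⊢
        linarith
      have : ((r:ℝ)+2) * (a+b)^r ≤ 3*(a+b) := by
        push_cast at h1; nlinarith
      have h6 : (Nat.factorial 3 : ℝ) = 6 := by norm_num [Nat.factorial]
      rw [h6]
      nlinarith
    · -- j ≥ 2
      have hj2 : 2 ≤ j := hj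
      have hstep1 : ((r:ℝ)+2) * (a+b)^r ≤ ((j:ℝ)+2) * (a+b)^j :=
        mono_bound j (a+b) ht0 ht23 r hjr
      have htb : a + b ≤ 2 * b := by linarith
      have hstep2 : (a+b)^j ≤ (2*b)^j := pow_le_pow_left₀ ht0 htb j
      have hbEj : b^j ≤ M.esymm j := my_esymm_ge M b hb hbel j (by omega)
      have hfact : ((j:ℝ)+2) * 2^j ≤ (Nat.factorial (j+2) : ℝ) := by
        have h2 := two_pow_le_fact j hj2
        have : (j+2) * 2^j ≤ (j+2) * Nat.factorial (j+1) := Nat.mul_le_mul_left _ h2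
        have heq : (j+2) * Nat.factorial (j+1) = Nat.factorial (j+2) :=
          (Nat.factorial_succ (j+1)).symm
        rw [heq] at this
        exact_mod_cast this
      have hbj : (0:ℝ) ≤ b^j := pow_nonneg hb j
      calc ((r:ℝ)+2) * (a+b)^r ≤ ((j:ℝ)+2) * (a+b)^j := hstep1
        _ ≤ ((j:ℝ)+2) * (2*b)^j := by
            exact mul_le_mul_of_nonneg_left hstep2 (by positivity)
        _ = (((j:ℝ)+2) * 2^j) * b^j := by rw [mul_pow]; ring
        _ ≤ (Nat.factorial (j+2) : ℝ) * b^j := mul_le_mul_of_nonneg_right hfact hbj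
        _ ≤ (Nat.factorial (j+2) : ℝ) * M.esymm j := by
            exact mul_le_mul_of_nonneg_left hbEj (by positivity)
  -- binomial bound
  have hbinom : (a+b)^(r+2) ≤ a^(r+2) + b^(r+2) + ((r:ℝ)+2) * a * b * (a+b)^r :=
    binom_bound r a b ha hb
  have hmain : (a+b)^(r+2) - a^(r+2) - b^(r+2)
      ≤ (Nat.factorial (j+2) : ℝ) * (a * b * M.esymm j) := by
    have hab0 : (0:ℝ) ≤ a * b := mul_nonneg ha hb
    have := mul_le_mul_of_nonneg_left key hab0
    nlinarith
  -- now rewrite both sides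
  rw [pricePoly, pricePoly, ← Finset.esymm_map_val, ← Finset.esymm_map_val, hMx, hMy,
    my_esymm_cons, my_esymm_cons, my_esymm_cons, my_esymm_cons]
  rw [Fin.sum_univ_succ, Fin.sum_univ_succ, Fin.sum_univ_succ (f := fun i => y i ^ (r+2))]
  have hyQ : ∀ i : Fin (m+1), y i.succ ^ (r+2) = x i.succ.succ ^ (r+2) := by
    intro i; simp [hy, Fin.val_succ]
  simp only [hyQ]
  have hy0 : y 0 = a + b := by simp [hy]
  rw [hy0]
  set Q := ∑ i : Fin (m+1), x i.succ.succ ^ (r+2) with hQ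
  set F := (Nat.factorial (j+2) : ℝ) with hF
  set E0 := M.esymm j
  set E1 := M.esymm (j+1)
  set E2 := M.esymm (j+2)
  have expand : F * (a * (b * E0 + E1) + (b * E1 + E2)) - F * ((a+b) * E1 + E2)
      = F * (a * b * E0) := by ring
  rw [show (Fin.succ 0 : Fin (m+3)) = 1 from Fin.succ_zero_eq_one, ← hadef, ← hbdef]
  simp only [ge_iff_le]
  linarith [hmain, expand]
end

section
/- Let k ≥ ℓ ≥ 3 and N ≥ ℓ. The minimum over the standard simplex {x ∈ ℝ^N : x_i ≥ 0, Σx_i = 1} of ℓ!·Σ_{|I|=ℓ, I⊆[N]} Π_{i∈I} x_i + Σ_i x_i^k equals 1/(ℓ-1)^{k-1}. -/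
open Finset

variable {α : Type*} [DecidableEq α]

def esym (s : Finset α) (w : α → ℝ) (m : ℕ) : ℝ :=
  ∑ I ∈ s.powersetCard m, ∏ i ∈ I, w i

lemma sum_erase_esym (s : Finset α) (w : α → ℝ) (m : ℕ) :
    ∑ i ∈ s, w i * esym (s.erase i) w m = (m + 1 : ℝ) * esym s w (m + 1) := by
  have hR : (m + 1 : ℝ) * esym s w (m + 1)
      = ∑ J ∈ s.powersetCard (m + 1), ∑ i ∈ J, w i * ∏ t ∈ J.erase i, w t := by
    rw [esym, Finset.mul_sum]
    apply Finset.sum_congr rfl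
    intro J hJ
    rw [mem_powersetCard] at hJ
    have : ∀ i ∈ J, w i * ∏ t ∈ J.erase i, w t = ∏ t ∈ J, w t := fun i hi =>
      Finset.mul_prod_erase J w hi
    rw [Finset.sum_congr rfl this, Finset.sum_const, hJ.2, nsmul_eq_mul]
    push_cast
    ring
  have hL : ∑ i ∈ s, w i * esym (s.erase i) w m
      = ∑ i ∈ s, ∑ I ∈ (s.erase i).powersetCard m, w i * ∏ t ∈ I, w t := by
    simp only [esym, Finset.mul_sum]
  rw [hL, hR]
  rw [Finset.sum_sigma' s (fun i => (s.erase i).powersetCard m)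
      (fun i I => w i * ∏ t ∈ I, w t),
    Finset.sum_sigma' (s.powersetCard (m + 1)) (fun J => J)
      (fun J i => w i * ∏ t ∈ J.erase i, w t)]
  apply Finset.sum_nbij' (i := fun p => (⟨insert p.1 p.2, p.1⟩ : Σ _ : Finset α, α))
    (j := fun q => (⟨q.2, q.1.erase q.2⟩ : Σ _ : α, Finset α))
  · rintro ⟨i, I⟩ hp
    rw [Finset.mem_sigma] at hp
    obtain ⟨hi, hI⟩ := hp
    rw [mem_powersetCard] at hI
    have hiI : i ∉ I := fun h => (Finset.notMem_erase i s) (hI.1 h)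
    rw [Finset.mem_sigma]
    constructor
    · rw [mem_powersetCard]
      constructor
      · exact Finset.insert_subset hi (hI.1.trans (s.erase_subset i))
      · rw [Finset.card_insert_of_notMem hiI, hI.2]
    · exact Finset.mem_insert_self _ _
  · rintro ⟨J, i⟩ hq
    rw [Finset.mem_sigma] at hq
    obtain ⟨hJ, hiJ⟩ := hq
    rw [mem_powersetCard] at hJ
    rw [Finset.mem_sigma]
    constructor
    · exact hJ.1 hiJ
    · rw [mem_powersetCard]
      constructor
      · exact Finset.erase_subset_erase i hJ.1
      · rw [Finset.card_erase_of_mem hiJ, hJ.2]; omega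
  · rintro ⟨i, I⟩ hp
    rw [Finset.mem_sigma] at hp
    obtain ⟨hi, hI⟩ := hp
    rw [mem_powersetCard] at hI
    have hiI : i ∉ I := fun h => (Finset.notMem_erase i s) (hI.1 h)
    simp [Finset.erase_insert hiI]
  · rintro ⟨J, i⟩ hq
    rw [Finset.mem_sigma] at hq
    obtain ⟨hJ, hiJ⟩ := hq
    simp [Finset.insert_erase hiJ]
  · rintro ⟨i, I⟩ hp
    rw [Finset.mem_sigma] at hp
    obtain ⟨hi, hI⟩ := hp
    rw [mem_powersetCard] at hI
    have hiI : i ∉ I := fun h => (Finset.notMem_erase i s) (hI.1 h)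
    simp [Finset.erase_insert hiI]

lemma esym_zero' (s : Finset α) (w : α → ℝ) : esym s w 0 = 1 := by simp [esym]

lemma esym_nonneg' {s : Finset α} {w : α → ℝ} (hw : ∀ i ∈ s, 0 ≤ w i) (m : ℕ) :
    0 ≤ esym s w m := by
  apply Finset.sum_nonneg
  intro I hI
  rw [mem_powersetCard] at hI
  exact Finset.prod_nonneg fun i hi => hw i (hI.1 hi)

lemma esym_erase {s : Finset α} {w : α → ℝ} {i : α} (h : i ∈ s) (m : ℕ) :
    esym s w (m + 1) = esym (s.erase i) w (m + 1) + w i * esym (s.erase i) w m := by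
  have h1 : s = insert i (s.erase i) := (Finset.insert_erase h).symm
  have h2 : i ∉ s.erase i := Finset.notMem_erase _ _
  rw [esym]
  conv_lhs => rw [h1]
  rw [Finset.powersetCard_succ_insert h2, Finset.sum_union, Finset.sum_image]
  · rw [esym, esym, Finset.mul_sum]
    congr 1
    apply Finset.sum_congr rfl
    intro I hI
    rw [mem_powersetCard] at hI
    have : i ∉ I := fun hiI => h2 (hI.1 hiI)
    rw [Finset.prod_insert this]
  · intro A hA B hB hAB
    rw [Finset.mem_coe, mem_powersetCard] at hA hB
    have hiA : i ∉ A := fun hx => h2 (hA.1 hx)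
    have hiB : i ∉ B := fun hx => h2 (hB.1 hx)
    have := congrArg (fun (t : Finset α) => t.erase i) hAB
    simpa [Finset.erase_insert hiA, Finset.erase_insert hiB] using this
  · rw [Finset.disjoint_left]
    intro J hJ hJ'
    rw [mem_powersetCard] at hJ
    rcases Finset.mem_image.mp hJ' with ⟨I, hI, rfl⟩
    exact h2 (hJ.1 (Finset.mem_insert_self i I))

/-- identity: σ·e_{m+1} = (m+2)·e_{m+2} + Σᵢ wᵢ²·e_m(s \ i). -/
lemma esym_identity (s : Finset α) (w : α → ℝ) (m : ℕ) :
    (∑ i ∈ s, w i) * esym s w (m + 1)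
      = (m + 2 : ℝ) * esym s w (m + 2) + ∑ i ∈ s, (w i)^2 * esym (s.erase i) w m := by
  rw [Finset.sum_mul]
  have : ∀ i ∈ s, w i * esym s w (m + 1)
      = w i * esym (s.erase i) w (m + 1) + (w i)^2 * esym (s.erase i) w m := by
    intro i hi
    rw [esym_erase hi m]; ring
  rw [Finset.sum_congr rfl this, Finset.sum_add_distrib, sum_erase_esym s w (m+1)]
  push_cast
  ring

/-- difference of esym after erasing two different elements. -/
lemma esym_erase_sub {s : Finset α} {w : α → ℝ} {i j : α} (hi : i ∈ s) (hj : j ∈ s)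
    (hij : i ≠ j) (m : ℕ) :
    esym (s.erase i) w (m + 1) - esym (s.erase j) w (m + 1)
      = (w j - w i) * esym ((s.erase i).erase j) w m := by
  have hj' : j ∈ s.erase i := Finset.mem_erase.mpr ⟨hij.symm, hj⟩
  have hi' : i ∈ s.erase j := Finset.mem_erase.mpr ⟨hij, hi⟩
  rw [esym_erase hj' m, esym_erase hi' m, Finset.erase_right_comm]
  ring

/-- helper: a double sum is nonneg if each symmetrized term is nonneg. -/
lemma double_sum_nonneg (s : Finset α) (g : α → α → ℝ)
    (h : ∀ i ∈ s, ∀ j ∈ s, 0 ≤ g i j + g j i) :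
    0 ≤ ∑ i ∈ s, ∑ j ∈ s, g i j := by
  have hc : ∑ i ∈ s, ∑ j ∈ s, g i j = ∑ i ∈ s, ∑ j ∈ s, g j i := Finset.sum_comm
  have h2 : (2:ℝ) * (∑ i ∈ s, ∑ j ∈ s, g i j)
      = ∑ i ∈ s, ∑ j ∈ s, (g i j + g j i) := by
    rw [two_mul]
    nth_rewrite 2 [hc]
    rw [← Finset.sum_add_distrib]
    apply Finset.sum_congr rfl; intro i _
    rw [← Finset.sum_add_distrib]
  nlinarith [Finset.sum_nonneg (fun i (hi : i ∈ s) =>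
    Finset.sum_nonneg (fun j (hj : j ∈ s) => h i hi j hj))]

/-- Key correlation inequality (Chebyshev-type). -/
lemma q_lemma (s : Finset α) (w : α → ℝ) (hw : ∀ i ∈ s, 0 ≤ w i) (m : ℕ) :
    (∑ j ∈ s, w j) * ∑ i ∈ s, (w i)^2 * esym (s.erase i) w (m + 1)
      ≤ (∑ j ∈ s, (w j)^2) * ∑ i ∈ s, w i * esym (s.erase i) w (m + 1) := by
  set E : α → ℝ := fun i => esym (s.erase i) w (m + 1) with hE
  have key : 0 ≤ ∑ j ∈ s, ∑ i ∈ s, (w j^2 * (w i * E i) - w j * (w i^2 * E i)) := by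
    apply double_sum_nonneg
    intro a ha b hb
    rcases eq_or_ne a b with rfl | hab
    · have hz : w a ^ 2 * (w a * E a) - w a * (w a ^ 2 * E a) = 0 := by ring
      linarith
    · have hsub : E b - E a = (w a - w b) * esym ((s.erase b).erase a) w m :=
        esym_erase_sub hb ha hab.symm m
      have heq : (w a^2 * (w b * E b) - w a * (w b^2 * E b))
          + (w b^2 * (w a * E a) - w b * (w a^2 * E a))
          = w a * w b * (w a - w b) * (E b - E a) := by ring
      rw [heq, hsub]
      have h1 : 0 ≤ w a * w b := mul_nonneg (hw a ha) (hw b hb)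
      have h2 : 0 ≤ esym ((s.erase b).erase a) w m := by
        apply esym_nonneg'
        intro i hi
        exact hw i (Finset.mem_of_mem_erase (Finset.mem_of_mem_erase hi))
      calc (0:ℝ) ≤ (w a * w b) * ((w a - w b)^2 * esym ((s.erase b).erase a) w m) :=
            mul_nonneg h1 (mul_nonneg (sq_nonneg _) h2)
        _ = w a * w b * (w a - w b) * ((w a - w b) * esym ((s.erase b).erase a) w m) := by ring
  have expand : ∑ j ∈ s, ∑ i ∈ s, (w j^2 * (w i * E i) - w j * (w i^2 * E i))
      = (∑ j ∈ s, (w j)^2) * (∑ i ∈ s, w i * E i)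
        - (∑ j ∈ s, w j) * (∑ i ∈ s, (w i)^2 * E i) := by
    rw [Finset.sum_mul, Finset.sum_mul, ← Finset.sum_sub_distrib]
    apply Finset.sum_congr rfl
    intro j _
    rw [Finset.mul_sum, Finset.mul_sum, ← Finset.sum_sub_distrib]
  rw [expand] at key
  linarith

/-- step inequality: (m+3)·e_{m+3} ≥ e_{m+2}·(1 - (m+2)p), when Σ w = 1. -/
lemma esym_step (s : Finset α) (w : α → ℝ) (hw : ∀ i ∈ s, 0 ≤ w i)
    (hsum : ∑ i ∈ s, w i = 1) (m : ℕ) :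
    esym s w (m + 2) * (1 - (m + 2 : ℝ) * (∑ j ∈ s, (w j)^2))
      ≤ (m + 3 : ℝ) * esym s w (m + 3) := by
  set p : ℝ := ∑ j ∈ s, (w j)^2 with hp
  have hid := esym_identity s w (m + 1)
  rw [hsum, one_mul] at hid
  -- hid : esym s w (m+2) = (m+3)*esym s w (m+3) + Σ wᵢ² esym(erase i)(m+1)
  have hq := q_lemma s w hw m
  rw [hsum, one_mul, sum_erase_esym s w (m + 1)] at hq
  -- hq : Σ wᵢ² esym(erase i)(m+1) ≤ p * ((m+2) * esym s w (m+2))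
  push_cast at hid hq ⊢
  nlinarith [hq, hid]

lemma esym_one_eq (s : Finset α) (w : α → ℝ) : esym s w 1 = ∑ i ∈ s, w i := by
  have := sum_erase_esym s w 0
  simp only [esym_zero', mul_one] at this
  have h2 : ((0:ℕ) + 1 : ℝ) = 1 := by norm_num
  rw [h2, one_mul] at this
  exact this.symm

/-- Main lemma: (j+2)!·e_{j+2} ≥ ∏_{i=1}^{j+1} (1 - i·p) when Σ w = 1 and (j+1)p ≤ 1. -/
lemma esym_main (s : Finset α) (w : α → ℝ) (hw : ∀ i ∈ s, 0 ≤ w i)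
    (hsum : ∑ i ∈ s, w i = 1) :
    ∀ j : ℕ, ((j : ℝ) + 1) * (∑ i ∈ s, (w i)^2) ≤ 1 →
      ∏ i ∈ Finset.range (j + 1), (1 - ((i : ℝ) + 1) * (∑ i ∈ s, (w i)^2))
        ≤ ((j + 2).factorial : ℝ) * esym s w (j + 2) := by
  set p : ℝ := ∑ i ∈ s, (w i)^2 with hp
  have hp0 : 0 ≤ p := Finset.sum_nonneg fun i _ => sq_nonneg _
  intro j
  induction j with
  | zero =>
    intro _
    have hid := esym_identity s w 0
    rw [hsum, one_mul, esym_one_eq s w, hsum] at hid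
    have hz : ∑ i ∈ s, (w i)^2 * esym (s.erase i) w 0 = p := by
      rw [hp]
      apply Finset.sum_congr rfl
      intro i _
      rw [esym_zero', mul_one]
    rw [hz] at hid
    have hfac : ((0 + 2).factorial : ℝ) = 2 := by norm_num [Nat.factorial]
    rw [Finset.range_one, Finset.prod_singleton, hfac]
    norm_num at hid ⊢
    linarith
  | succ n ih =>
    intro hcond
    have hn2 : ((n : ℝ) + 1 + 1) = (n : ℝ) + 2 := by ring
    have hcondr : ((n : ℝ) + 2) * p ≤ 1 := by push_cast at hcond; linarith
    have hcond' : ((n : ℝ) + 1) * p ≤ 1 := by nlinarith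
    have ih' := ih hcond'
    have hstep := esym_step s w hw hsum n
    rw [← hp] at hstep
    have hfac : (0:ℝ) ≤ ((n + 2).factorial : ℝ) := by positivity
    have hlast : (0:ℝ) ≤ 1 - ((n : ℝ) + 2) * p := by linarith
    rw [Finset.prod_range_succ]
    push_cast
    rw [hn2]
    have hA : (∏ i ∈ Finset.range (n + 1), (1 - ((i : ℝ) + 1) * p)) * (1 - ((n:ℝ) + 2) * p)
        ≤ (((n + 2).factorial : ℝ) * esym s w (n + 2)) * (1 - ((n:ℝ) + 2) * p) :=
      mul_le_mul_of_nonneg_right ih' hlast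
    have hB : (((n + 2).factorial : ℝ)) * (esym s w (n + 2) * (1 - ((n:ℝ) + 2) * p))
        ≤ ((n + 2).factorial : ℝ) * (((n:ℝ) + 3) * esym s w (n + 3)) :=
      mul_le_mul_of_nonneg_left hstep hfac
    have hC : ((n + 1 + 2).factorial : ℝ) = ((n + 2).factorial : ℝ) * ((n:ℝ) + 3) := by
      have h3 : n + 1 + 2 = (n + 2) + 1 := by omega
      rw [h3, Nat.factorial_succ]
      push_cast
      ring
    have hD : esym s w (n + 1 + 2) = esym s w (n + 3) := by norm_num
    rw [hC, hD]
    nlinarith [hA, hB]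

lemma mul_diff_pow_nonneg {a b : ℝ} (ha : 0 ≤ a) (hb : 0 ≤ b) (n : ℕ) :
    0 ≤ a * b * ((a - b) * (a^n - b^n)) := by
  apply mul_nonneg (mul_nonneg ha hb)
  rcases le_total a b with h | h
  · have h1 : a - b ≤ 0 := by linarith
    have h2 : a^n - b^n ≤ 0 := by
      have := pow_le_pow_left₀ ha h n
      linarith
    nlinarith [h1, h2]
  · have h1 : 0 ≤ a - b := by linarith
    have h2 : 0 ≤ a^n - b^n := by
      have := pow_le_pow_left₀ hb h n
      linarith
    exact mul_nonneg h1 h2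

/-- Chebyshev-type: Σ w^{n+2} ≥ p·Σ w^{n+1} when Σ w = 1. -/
lemma pow_sum_step (s : Finset α) (w : α → ℝ) (hw : ∀ i ∈ s, 0 ≤ w i)
    (hsum : ∑ i ∈ s, w i = 1) (n : ℕ) :
    (∑ j ∈ s, (w j)^2) * (∑ i ∈ s, (w i)^(n+1)) ≤ ∑ i ∈ s, (w i)^(n+2) := by
  have key : 0 ≤ ∑ j ∈ s, ∑ i ∈ s, (w j * (w i)^(n+2) - (w j)^2 * (w i)^(n+1)) := by
    apply double_sum_nonneg
    intro a ha b hb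
    have hsym : (w a * (w b)^(n+2) - (w a)^2 * (w b)^(n+1))
        + (w b * (w a)^(n+2) - (w b)^2 * (w a)^(n+1))
        = w a * w b * ((w a - w b) * ((w a)^n - (w b)^n)) := by ring
    rw [hsym]
    exact mul_diff_pow_nonneg (hw a ha) (hw b hb) n
  have expand : ∑ j ∈ s, ∑ i ∈ s, (w j * (w i)^(n+2) - (w j)^2 * (w i)^(n+1))
      = (∑ j ∈ s, w j) * (∑ i ∈ s, (w i)^(n+2))
        - (∑ j ∈ s, (w j)^2) * (∑ i ∈ s, (w i)^(n+1)) := by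
    rw [Finset.sum_mul, Finset.sum_mul, ← Finset.sum_sub_distrib]
    apply Finset.sum_congr rfl
    intro j _
    rw [Finset.mul_sum, Finset.mul_sum, ← Finset.sum_sub_distrib]
  rw [expand, hsum, one_mul] at key
  linarith

/-- p^{n+1} ≤ Σ w^{n+2} when Σ w = 1. -/
lemma pow_sum_ge (s : Finset α) (w : α → ℝ) (hw : ∀ i ∈ s, 0 ≤ w i)
    (hsum : ∑ i ∈ s, w i = 1) :
    ∀ n : ℕ, (∑ i ∈ s, (w i)^2)^(n+1) ≤ ∑ i ∈ s, (w i)^(n+2) := by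
  set p : ℝ := ∑ i ∈ s, (w i)^2 with hp
  have hp0 : 0 ≤ p := Finset.sum_nonneg fun i _ => sq_nonneg _
  intro n
  induction n with
  | zero => simp [hp]
  | succ m ih =>
    have h1 := pow_sum_step s w hw hsum (m + 1)
    calc p^(m+1+1) = p * p^(m+1) := by ring
      _ ≤ p * (∑ i ∈ s, (w i)^(m+2)) := by
          exact mul_le_mul_of_nonneg_left ih hp0
      _ ≤ ∑ i ∈ s, (w i)^(m+1+2) := by
          have : m + 1 + 2 = m + 3 := by omega
          rw [this] at h1 ⊢
          exact h1

lemma pow_sub_pow_le' (a b : ℝ) (hb : 0 ≤ b) (hba : b ≤ a) (n : ℕ) :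
    a^(n+1) - b^(n+1) ≤ ((n:ℝ)+1) * a^n * (a - b) := by
  induction n with
  | zero => norm_num
  | succ m ih =>
    have ha : 0 ≤ a := le_trans hb hba
    have h1 : a^(m+2) - b^(m+2) = a * (a^(m+1) - b^(m+1)) + b^(m+1) * (a - b) := by ring
    have h2 : b^(m+1) ≤ a^(m+1) := pow_le_pow_left₀ hb hba (m+1)
    have h3 : a * (a^(m+1) - b^(m+1)) ≤ a * (((m:ℝ)+1) * a^m * (a - b)) :=
      mul_le_mul_of_nonneg_left ih ha
    have h4 : b^(m+1) * (a - b) ≤ a^(m+1) * (a - b) :=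
      mul_le_mul_of_nonneg_right h2 (by linarith)
    have h5 : a * (((m:ℝ)+1) * a^m * (a - b)) = ((m:ℝ)+1) * a^(m+1) * (a - b) := by ring
    push_cast
    nlinarith [h1, h3, h4, h5]

lemma nat_le_pow_aux (L : ℕ) (hL : 2 ≤ L) : ∀ K : ℕ, L ≤ K → K ≤ L ^ (K - L + 1) := by
  intro K
  induction K with
  | zero => omega
  | succ m ih =>
    intro h
    rcases Nat.lt_or_ge L (m+1) with h1 | h1
    · have hm : L ≤ m := by omega
      have := ih hm
      have hstep : m + 1 - L + 1 = (m - L + 1) + 1 := by omega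
      rw [hstep, pow_succ]
      calc m + 1 ≤ 2 * m := by omega
        _ = m * 2 := by ring
        _ ≤ L ^ (m - L + 1) * L := Nat.mul_le_mul this hL
    · have : L = m + 1 := by omega
      subst this
      simp

set_option maxHeartbeats 1000000 in
lemma lower_bound {N : ℕ} (ℓ k : ℕ) (hℓ : 3 ≤ ℓ) (hk : ℓ ≤ k)
    (x : Fin N → ℝ) (hx : ∀ i, 0 ≤ x i) (hsum : ∑ i, x i = 1) :
    1 / ((ℓ : ℝ) - 1) ^ (k - 1)
      ≤ (Nat.factorial ℓ : ℝ) * esym Finset.univ x ℓ + ∑ i, (x i) ^ k := by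
  set L := ℓ - 1 with hLdef
  set K := k - 1 with hKdef
  have hL2 : 2 ≤ L := by omega
  have hLK : L ≤ K := by omega
  have hcastL : ((ℓ : ℝ) - 1) = (L : ℝ) := by
    have h : ℓ = L + 1 := by omega
    rw [h]; push_cast; ring
  have hLpos : (0:ℝ) < (L:ℝ) := by
    have : 0 < L := by omega
    exact_mod_cast this
  set q : ℝ := 1 / (L:ℝ) with hqdef
  have hq0 : 0 < q := by positivity
  set p : ℝ := ∑ i, (x i)^2 with hp
  have hp0 : 0 ≤ p := Finset.sum_nonneg fun i _ => sq_nonneg _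
  have hx' : ∀ i ∈ (Finset.univ : Finset (Fin N)), 0 ≤ x i := fun i _ => hx i
  have hpk : p ^ K ≤ ∑ i, (x i) ^ k := by
    have h := pow_sum_ge Finset.univ x hx' hsum (k - 2)
    have h1 : k - 2 + 2 = k := by omega
    have h2 : k - 2 + 1 = K := by omega
    rw [h1, h2] at h
    exact h
  have hE0 : 0 ≤ esym (Finset.univ : Finset (Fin N)) x ℓ := esym_nonneg' hx' ℓ
  have hF0 : (0:ℝ) ≤ (Nat.factorial ℓ : ℝ) := by positivity
  have hgoal_eq : 1 / ((ℓ : ℝ) - 1) ^ K = q ^ K := by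
    rw [hcastL, hqdef, one_div_pow]
  rw [hgoal_eq]
  rcases le_or_gt q p with hcase | hcase
  · -- q ≤ p : power sum alone suffices
    have h1 : q ^ K ≤ p ^ K := pow_le_pow_left₀ (le_of_lt hq0) hcase K
    nlinarith [mul_nonneg hF0 hE0]
  · -- p < q : use main esym lemma
    have hc1 : ((ℓ - 2 : ℕ) : ℝ) + 1 = (L : ℝ) := by
      have h : L = (ℓ - 2) + 1 := by omega
      rw [h]; push_cast; ring
    have hcond : (((ℓ - 2 : ℕ) : ℝ) + 1) * p ≤ 1 := by
      rw [hc1]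
      rw [hqdef] at hcase
      rw [lt_div_iff₀ hLpos] at hcase
      nlinarith
    have hmain := esym_main Finset.univ x hx' hsum (ℓ - 2) hcond
    have hi1 : ℓ - 2 + 1 = L := by omega
    have hi2 : ℓ - 2 + 2 = ℓ := by omega
    rw [hi1, hi2] at hmain
    -- split last factor off the product
    have hL1 : L = (L - 1) + 1 := by omega
    rw [hL1, Finset.prod_range_succ] at hmain
    have hc2 : ((L - 1 : ℕ) : ℝ) + 1 = (L : ℝ) := by
      have h : L - 1 + 1 = L := by omega
      exact_mod_cast h
    rw [hc2] at hmain
    have hLp1 : (L:ℝ) * p < 1 := by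
      rw [hqdef, lt_div_iff₀ hLpos] at hcase
      nlinarith
    have h1Lp : (0:ℝ) ≤ 1 - (L:ℝ) * p := by linarith
    -- bound the remaining product from below by q^(L-1)
    have hpb : q ^ (L - 1) ≤ ∏ i ∈ Finset.range (L - 1), (1 - ((i:ℝ) + 1) * p) := by
      have hcard : q ^ (L - 1) = ∏ _i ∈ Finset.range (L - 1), q := by
        rw [Finset.prod_const, Finset.card_range]
      rw [hcard]
      apply Finset.prod_le_prod
      · intro i _
        exact le_of_lt hq0
      · intro i hi
        rw [Finset.mem_range] at hi
        have hiL : ((i:ℝ) + 1) ≤ (L:ℝ) - 1 := by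
          have : (i:ℕ) + 1 ≤ L - 1 := by omega
          have hcast : ((i:ℝ) + 1) ≤ ((L - 1 : ℕ) : ℝ) := by exact_mod_cast this
          have : ((L - 1 : ℕ) : ℝ) = (L:ℝ) - 1 := by
            have h : L - 1 + 1 = L := by omega
            linarith [hc2]
          linarith
        have hqL : (L:ℝ) * q = 1 := by
          rw [hqdef]; field_simp
        have hip0 : 0 ≤ ((i:ℝ) + 1) := by positivity
        -- (i+1)*p ≤ (L-1)*q = 1 - q
        have h1 : ((i:ℝ) + 1) * p ≤ ((L:ℝ) - 1) * q := by
          have := mul_le_mul hiL (le_of_lt hcase) hp0 (by linarith : (0:ℝ) ≤ (L:ℝ) - 1)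
          linarith
        nlinarith
    have hchain1 : q ^ (L - 1) * (1 - (L:ℝ) * p)
        ≤ (Nat.factorial ℓ : ℝ) * esym Finset.univ x ℓ := by
      calc q ^ (L - 1) * (1 - (L:ℝ) * p)
          ≤ (∏ i ∈ Finset.range (L - 1), (1 - ((i:ℝ) + 1) * p)) * (1 - (L:ℝ) * p) :=
            mul_le_mul_of_nonneg_right hpb h1Lp
        _ ≤ _ := hmain
    -- K * q^K ≤ q^(L-1)
    have hKnat : K * L ^ (L - 1) ≤ L ^ K := by
      have h := nat_le_pow_aux L hL2 K hLK
      calc K * L ^ (L - 1) ≤ L ^ (K - L + 1) * L ^ (L - 1) := Nat.mul_le_mul_right _ h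
        _ = L ^ (K - L + 1 + (L - 1)) := (pow_add L _ _).symm
        _ = L ^ K := by congr 1; omega
    have hKR : (K:ℝ) * q ^ K ≤ q ^ (L - 1) := by
      have key : (K:ℝ) * (L:ℝ) ^ (L - 1) ≤ (L:ℝ) ^ K := by exact_mod_cast hKnat
      rw [hqdef, one_div_pow, one_div_pow, mul_one_div,
        div_le_div_iff₀ (by positivity) (by positivity), one_mul]
      exact key

    have hchain2 : (K:ℝ) * q ^ K * (1 - (L:ℝ) * p)
        ≤ (Nat.factorial ℓ : ℝ) * esym Finset.univ x ℓ := by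
      calc (K:ℝ) * q ^ K * (1 - (L:ℝ) * p)
          ≤ q ^ (L - 1) * (1 - (L:ℝ) * p) := mul_le_mul_of_nonneg_right hKR h1Lp
        _ ≤ _ := hchain1
    -- K * q^K * (1 - L*p) = K * q^(k-2) * (q - p)
    have hqL : (L:ℝ) * q = 1 := by rw [hqdef]; field_simp
    have hKk2 : K = (k - 2) + 1 := by omega
    have hql : q * ((L:ℝ) * p) = p := by
      rw [← mul_assoc, mul_comm q (L:ℝ), hqL, one_mul]
    have heq : (K:ℝ) * q ^ K * (1 - (L:ℝ) * p) = (K:ℝ) * q ^ (k - 2) * (q - p) := by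
      rw [hKk2, pow_succ]
      linear_combination (-(((k - 2 + 1 : ℕ) : ℝ) * q ^ (k - 2))) * hql
    have hdiff : q ^ K - p ^ K ≤ (K:ℝ) * q ^ (k - 2) * (q - p) := by
      have h := pow_sub_pow_le' q p hp0 (le_of_lt hcase) (k - 2)
      have hcK : ((k - 2 : ℕ) : ℝ) + 1 = (K:ℝ) := by
        have h2 : K = (k - 2) + 1 := by omega
        rw [h2]; push_cast; ring
      rw [hcK] at h
      have h3 : k - 2 + 1 = K := by omega
      rw [h3] at h
      exact h
    rw [heq] at hchain2
    linarith

set_option maxHeartbeats 1000000 in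
theorem stmt_9 (ℓ k N : ℕ) (hℓ : 3 ≤ ℓ) (hk : ℓ ≤ k) (hN : ℓ ≤ N) :
    IsLeast {s : ℝ | ∃ x : Fin N → ℝ, (∀ i, 0 ≤ x i) ∧ (∑ i, x i) = 1 ∧
        s = (Nat.factorial ℓ : ℝ) *
              ∑ I ∈ (Finset.univ : Finset (Fin N)).powersetCard ℓ, ∏ i ∈ I, x i +
            ∑ i, (x i) ^ k}
      (1 / ((ℓ : ℝ) - 1) ^ (k - 1)) := by
  have hL2 : 2 ≤ ℓ - 1 := by omega
  set L := ℓ - 1 with hLdef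
  have hLpos : (0:ℝ) < (L:ℝ) := by
    have : 0 < L := by omega
    exact_mod_cast this
  have hcastL : ((ℓ : ℝ) - 1) = (L : ℝ) := by
    have h : ℓ = L + 1 := by omega
    rw [h]; push_cast; ring
  set q : ℝ := 1 / (L:ℝ) with hqdef
  have hq0 : 0 < q := by positivity
  have hqL : (L:ℝ) * q = 1 := by rw [hqdef]; field_simp
  constructor
  · -- membership : the witness supported on ℓ-1 coordinates
    refine ⟨fun i => if (i : ℕ) < L then q else 0, ?_, ?_, ?_⟩
    · intro i
      by_cases h : (i : ℕ) < L
      · simp [h, le_of_lt hq0]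
      · simp [h]
    · -- sum = 1
      have hfilt : (Finset.univ.filter (fun i : Fin N => (i : ℕ) < L)).card = L := by
        have hLN : L ≤ N := by omega
        have himg : Finset.univ.filter (fun i : Fin N => (i : ℕ) < L)
            = Finset.map (Fin.castLEEmb hLN) Finset.univ := by
          ext j
          simp only [Finset.mem_filter, Finset.mem_univ, true_and, Finset.mem_map]
          constructor
          · intro hj
            exact ⟨⟨(j : ℕ), hj⟩, by
              simp [Fin.castLEEmb, Fin.castLE, Fin.ext_iff]⟩
          · rintro ⟨i, rfl⟩
            simpa using i.isLt
        rw [himg, Finset.card_map, Finset.card_univ, Fintype.card_fin]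
      rw [← Finset.sum_filter, Finset.sum_const, hfilt, nsmul_eq_mul, hqL]
    · -- value
      have hzero : ∑ I ∈ (Finset.univ : Finset (Fin N)).powersetCard ℓ,
          ∏ i ∈ I, (if (i : ℕ) < L then q else 0) = 0 := by
        apply Finset.sum_eq_zero
        intro I hI
        rw [mem_powersetCard] at hI
        have : ∃ i ∈ I, ¬ ((i : ℕ) < L) := by
          by_contra hcon
          push_neg at hcon
          have hsub : I ⊆ Finset.univ.filter (fun i : Fin N => (i : ℕ) < L) := by
            intro i hi
            exact Finset.mem_filter.mpr ⟨Finset.mem_univ _, hcon i hi⟩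
          have hcard := Finset.card_le_card hsub
          have hfilt : (Finset.univ.filter (fun i : Fin N => (i : ℕ) < L)).card ≤ L := by
            classical
            have hLN : L ≤ N := by omega
            -- reuse: card = L
            have himg : Finset.univ.filter (fun i : Fin N => (i : ℕ) < L)
                = Finset.map (Fin.castLEEmb hLN) Finset.univ := by
              ext j
              simp only [Finset.mem_filter, Finset.mem_univ, true_and, Finset.mem_map]
              constructor
              · intro hj
                exact ⟨⟨(j : ℕ), hj⟩, by
                  simp [Fin.castLEEmb, Fin.castLE, Fin.ext_iff]⟩
              · rintro ⟨i, rfl⟩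
                simpa using i.isLt
            rw [himg, Finset.card_map, Finset.card_univ, Fintype.card_fin]
          omega
        obtain ⟨i, hiI, hiL⟩ := this
        apply Finset.prod_eq_zero hiI
        simp [hiL]
      rw [hzero, mul_zero, zero_add]
      -- power sum = q^(k-1)
      have hpow : ∀ i : Fin N, (if (i : ℕ) < L then q else 0) ^ k
          = (if (i : ℕ) < L then q ^ k else 0) := by
        intro i
        by_cases h : (i : ℕ) < L
        · simp [h]
        · simp [h, zero_pow (show k ≠ 0 by omega)]
      rw [Finset.sum_congr rfl (fun i _ => hpow i)]
      have hfilt : (Finset.univ.filter (fun i : Fin N => (i : ℕ) < L)).card = L := by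
        have hLN : L ≤ N := by omega
        have himg : Finset.univ.filter (fun i : Fin N => (i : ℕ) < L)
            = Finset.map (Fin.castLEEmb hLN) Finset.univ := by
          ext j
          simp only [Finset.mem_filter, Finset.mem_univ, true_and, Finset.mem_map]
          constructor
          · intro hj
            exact ⟨⟨(j : ℕ), hj⟩, by
              simp [Fin.castLEEmb, Fin.castLE, Fin.ext_iff]⟩
          · rintro ⟨i, rfl⟩
            simpa using i.isLt
        rw [himg, Finset.card_map, Finset.card_univ, Fintype.card_fin]
      rw [← Finset.sum_filter, Finset.sum_const, hfilt, nsmul_eq_mul]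
      have hksplit : k = (k - 1) + 1 := by omega
      symm
      rw [hcastL, ← one_div_pow]
      calc (L:ℝ) * q ^ k = (L:ℝ) * (q ^ (k-1) * q) := by
            rw [← pow_succ, ← hksplit]
        _ = q ^ (k-1) * ((L:ℝ) * q) := by ring
        _ = q ^ (k-1) := by rw [hqL, mul_one]
        _ = (1 / (L:ℝ)) ^ (k-1) := by rw [hqdef]
  · -- lower bound
    rintro s ⟨x, hx, hsum, rfl⟩
    exact lower_bound ℓ k hℓ hk x hx hsum
end

section
/- For every integer k ≥ 3, if x_1, x_2, x_3 are non-negative reals with x_1 ≤ x_2 ≤ x_3 and x_1 + x_2 + x_3 = 1, then 6·x_1·x_2·x_3 + x_1^k + x_2^k ≥ (x_1 + x_2)^k. -/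
lemma aux_stmt11 (a b : ℝ) (ha : 0 ≤ a) (hb : 0 ≤ b) (hs : a + b ≤ 2/3) :
    ∀ j : ℕ, (a + b) ^ (j + 3) ≤ a ^ (j + 3) + b ^ (j + 3) + 2 * a * b := by
  have hsnn : (0:ℝ) ≤ a + b := by linarith
  intro j
  induction j with
  | zero =>
    have hab : 0 ≤ a * b := mul_nonneg ha hb
    simp only [Nat.zero_add]
    nlinarith [mul_nonneg hab (show (0:ℝ) ≤ 2/3 - (a+b) by linarith)]
  | succ k ih =>
    have habk : a ^ (k + 1) ≤ (a + b) ^ (k + 1) :=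
      pow_le_pow_left₀ ha (by linarith) _
    have hbbk : b ^ (k + 1) ≤ (a + b) ^ (k + 1) :=
      pow_le_pow_left₀ hb (by linarith) _
    have hsum2 : a ^ (k + 2) + b ^ (k + 2) ≤ (a + b) ^ (k + 2) := by
      have h1 : a ^ (k + 2) = a * a ^ (k + 1) := by ring
      have h2 : b ^ (k + 2) = b * b ^ (k + 1) := by ring
      have h3 : (a + b) ^ (k + 2) = (a + b) * (a + b) ^ (k + 1) := by ring
      rw [h1, h2, h3]
      nlinarith [mul_le_mul_of_nonneg_left habk ha, mul_le_mul_of_nonneg_left hbbk hb]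
    have hsmall : (a + b) ^ (k + 2) ≤ (a + b) ^ 2 := by
      apply pow_le_pow_of_le_one hsnn (by linarith) (by omega)
    have hsq : (a + b) ^ 2 ≤ 4 / 9 := by nlinarith
    have hab : 0 ≤ a * b := mul_nonneg ha hb
    have key : a ^ (k + 2) + b ^ (k + 2) ≤ 4 / 9 := by linarith
    have hstep : (a + b) ^ (k + 1 + 3) = (a + b) * (a + b) ^ (k + 3) := by ring
    rw [hstep]
    have h4 : (a + b) * (a + b) ^ (k + 3) ≤ (a + b) * (a ^ (k + 3) + b ^ (k + 3) + 2 * a * b) :=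
      mul_le_mul_of_nonneg_left ih hsnn
    have hexp : b * a ^ (k + 3) + a * b ^ (k + 3) = a * b * (a ^ (k + 2) + b ^ (k + 2)) := by ring
    have e1 : a ^ (k + 1 + 3) = a * a ^ (k + 3) := by ring
    have e2 : b ^ (k + 1 + 3) = b * b ^ (k + 3) := by ring
    have h5 : (a + b) * (a ^ (k + 3) + b ^ (k + 3) + 2 * a * b)
        = a * a ^ (k + 3) + b * b ^ (k + 3) + (b * a ^ (k + 3) + a * b ^ (k + 3))
          + 2 * a * b * (a + b) := by ring
    have h6 : a * b * (a ^ (k + 2) + b ^ (k + 2)) ≤ 4 / 9 * (a * b) := by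
      nlinarith [mul_le_mul_of_nonneg_left key hab]
    have h7 : 2 * a * b * (a + b) ≤ 2 * a * b * (2 / 3) := by
      nlinarith [mul_nonneg hab (show (0:ℝ) ≤ 2/3 - (a+b) by linarith)]
    rw [e1, e2]
    linarith

theorem stmt_11 (k : ℕ) (hk : 3 ≤ k) (x₁ x₂ x₃ : ℝ) (h0 : 0 ≤ x₁)
    (h12 : x₁ ≤ x₂) (h23 : x₂ ≤ x₃) (hsum : x₁ + x₂ + x₃ = 1) :
    6 * x₁ * x₂ * x₃ + x₁ ^ k + x₂ ^ k ≥ (x₁ + x₂) ^ k := by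
  obtain ⟨j, rfl⟩ : ∃ j, k = j + 3 := ⟨k - 3, by omega⟩
  have h1 : 0 ≤ x₂ := le_trans h0 h12
  have h3 : (1:ℝ)/3 ≤ x₃ := by linarith
  have hs : x₁ + x₂ ≤ 2/3 := by linarith
  have := aux_stmt11 x₁ x₂ h0 h1 hs j
  have hab : 0 ≤ x₁ * x₂ := mul_nonneg h0 h1
  nlinarith [mul_le_mul_of_nonneg_left h3 hab]
end

section
/- Let k ≥ 1 and let x_2, x_3, …, x_N be non-negative reals with x_2 ≤ x_3 ≤ ⋯ ≤ x_N (N ≥ k+1). For a set I of indices write x_I^s for the product Π x_{i_j}^{s_j}. Given a non-decreasing sequence of positive integer exponents ℓ_1 ≤ ℓ_2 ≤ ⋯ ≤ ℓ_k, we have Σ_{I ⊆ {2,…,N}, |I|=k} Π_{j=1}^k x_{I_j}^{ℓ_j} ≥ (1/k)·x_{N-k+1}^{ℓ_1}·Σ_{I ⊆ {2,…,N}, |I|=k-1} Π_{j=1}^{k-1} x_{I_j}^{ℓ_{j+1}}, where I_j denotes the j-th smallest element of I. -/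
open Finset


/-- rank of `i` in `s`: number of elements of `s` that are `≤ i`. -/
def rnk17 {α : Type*} [LinearOrder α] (s : Finset α) (i : α) : ℕ :=
  (s.filter (· ≤ i)).card

lemma swap_pow17 {a b : ℝ} (hb : 0 ≤ b) (hba : b ≤ a) {c c' : ℕ} (h : c ≤ c') :
    b ^ c' * a ^ c ≤ a ^ c' * b ^ c := by
  obtain ⟨d, rfl⟩ := Nat.exists_eq_add_of_le h
  have ha : 0 ≤ a := hb.trans hba
  calc b ^ (c + d) * a ^ c = (b ^ c * a ^ c) * b ^ d := by ring
    _ ≤ (b ^ c * a ^ c) * a ^ d := by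
        have : b ^ d ≤ a ^ d := pow_le_pow_left₀ hb hba d
        have hnn : 0 ≤ b ^ c * a ^ c := by positivity
        exact mul_le_mul_of_nonneg_left this hnn
    _ = a ^ (c + d) * b ^ c := by ring

lemma rank_bound17 {α : Type*} [LinearOrder α] (ℓ : ℕ → ℕ) (hℓ : Monotone ℓ)
    (x : α → ℝ) (a : ℝ) :
    ∀ u : Finset α, (∀ i ∈ u, 0 ≤ x i) → (∀ i ∈ u, x i ≤ a) →
      a ^ ℓ 1 * ∏ i ∈ u, x i ^ ℓ (rnk17 u i + 1) ≤
        a ^ ℓ (u.card + 1) * ∏ i ∈ u, x i ^ ℓ (rnk17 u i) := by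
  intro u
  induction u using Finset.strongInduction with
  | _ u ih =>
    intro h0 hle
    rcases u.eq_empty_or_nonempty with rfl | hu
    · simp
    · set M := u.max' hu with hM
      have hMu : M ∈ u := u.max'_mem hu
      have ha : 0 ≤ a := le_trans (h0 M hMu) (hle M hMu)
      have hxM : 0 ≤ x M := h0 M hMu
      set u' := u.erase M with hu'
      have hss : u' ⊂ u := Finset.erase_ssubset hMu
      have hcard : u'.card + 1 = u.card := Finset.card_erase_add_one hMu
      have hrnkM : rnk17 u M = u.card := by
        unfold rnk17
        rw [Finset.filter_true_of_mem fun i hi => u.le_max' i hi]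
      have hrnk : ∀ i ∈ u', rnk17 u' i = rnk17 u i := by
        intro i hi
        have hiM : i < M :=
          lt_of_le_of_ne (u.le_max' i (Finset.mem_of_mem_erase hi)) (Finset.ne_of_mem_erase hi)
        unfold rnk17
        congr 1
        ext j
        simp only [Finset.mem_filter, Finset.mem_erase, hu']
        constructor
        · rintro ⟨⟨_, hj⟩, hji⟩; exact ⟨hj, hji⟩
        · rintro ⟨hj, hji⟩
          exact ⟨⟨(lt_of_le_of_lt hji hiM).ne, hj⟩, hji⟩
      have e1 : ∏ i ∈ u, x i ^ ℓ (rnk17 u i + 1)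
          = x M ^ ℓ (u.card + 1) * ∏ i ∈ u', x i ^ ℓ (rnk17 u' i + 1) := by
        rw [← Finset.mul_prod_erase u _ hMu, hrnkM]
        exact congrArg _ (Finset.prod_congr rfl fun i hi => by rw [hrnk i hi])
      have e2 : ∏ i ∈ u, x i ^ ℓ (rnk17 u i)
          = x M ^ ℓ u.card * ∏ i ∈ u', x i ^ ℓ (rnk17 u' i) := by
        rw [← Finset.mul_prod_erase u _ hMu, hrnkM]
        exact congrArg _ (Finset.prod_congr rfl fun i hi => by rw [hrnk i hi])
      have IH := ih u' hss (fun i hi => h0 i (Finset.mem_of_mem_erase hi))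
        (fun i hi => hle i (Finset.mem_of_mem_erase hi))
      rw [hcard] at IH
      have hP0 : 0 ≤ ∏ i ∈ u', x i ^ ℓ (rnk17 u' i) := by
        apply Finset.prod_nonneg
        intro i hi
        exact pow_nonneg (h0 i (Finset.mem_of_mem_erase hi)) _
      rw [e1, e2]
      calc a ^ ℓ 1 * (x M ^ ℓ (u.card + 1) * ∏ i ∈ u', x i ^ ℓ (rnk17 u' i + 1))
          = x M ^ ℓ (u.card + 1) * (a ^ ℓ 1 * ∏ i ∈ u', x i ^ ℓ (rnk17 u' i + 1)) := by ring
        _ ≤ x M ^ ℓ (u.card + 1) * (a ^ ℓ u.card * ∏ i ∈ u', x i ^ ℓ (rnk17 u' i)) := by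
            exact mul_le_mul_of_nonneg_left IH (pow_nonneg hxM _)
        _ = (x M ^ ℓ (u.card + 1) * a ^ ℓ u.card) * ∏ i ∈ u', x i ^ ℓ (rnk17 u' i) := by ring
        _ ≤ (a ^ ℓ (u.card + 1) * x M ^ ℓ u.card) * ∏ i ∈ u', x i ^ ℓ (rnk17 u' i) := by
            exact mul_le_mul_of_nonneg_right
              (swap_pow17 hxM (hle M hMu) (hℓ (Nat.le_succ _))) hP0
        _ = a ^ ℓ (u.card + 1) * (x M ^ ℓ u.card * ∏ i ∈ u', x i ^ ℓ (rnk17 u' i)) := by ring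

lemma insert_bound17 {α : Type*} [LinearOrder α] [DecidableEq α] (ℓ : ℕ → ℕ) (hℓ : Monotone ℓ)
    (x : α → ℝ) (t : Finset α) (m : α) (hm : m ∉ t)
    (h0 : ∀ i ∈ t, 0 ≤ x i) (hm0 : 0 ≤ x m)
    (hle : ∀ i ∈ t, i < m → x i ≤ x m) :
    x m ^ ℓ 1 * ∏ i ∈ t, x i ^ ℓ (rnk17 t i + 1) ≤
      ∏ i ∈ insert m t, x i ^ ℓ (rnk17 (insert m t) i) := by
  classical
  set u := t.filter (· < m) with hu
  -- rank of m in insert m t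
  have hrm : rnk17 (insert m t) m = u.card + 1 := by
    unfold rnk17
    have hnm : m ∉ t.filter (· ≤ m) := by simp only [Finset.mem_filter]; tauto
    have hfeq : t.filter (· ≤ m) = t.filter (· < m) := by
      apply Finset.filter_congr
      intro i hi
      have hne : i ≠ m := fun h => hm (h ▸ hi)
      exact ⟨fun h => lt_of_le_of_ne h hne, fun h => h.le⟩
    rw [Finset.filter_insert, if_pos le_rfl, Finset.card_insert_of_notMem hnm, hfeq, hu]
  -- ranks of elements below m
  have hru : ∀ i ∈ u, rnk17 (insert m t) i = rnk17 u i ∧ rnk17 t i = rnk17 u i := by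
    intro i hi
    rw [hu, Finset.mem_filter] at hi
    obtain ⟨hit, him⟩ := hi
    constructor
    · unfold rnk17
      congr 1
      ext j
      simp only [Finset.mem_filter, Finset.mem_insert, hu]
      constructor
      · rintro ⟨hj | hj, hji⟩
        · exact absurd (lt_of_le_of_lt (hj ▸ hji) him) (lt_irrefl m)
        · exact ⟨⟨hj, lt_of_le_of_lt hji him⟩, hji⟩
      · rintro ⟨⟨hj, _⟩, hji⟩; exact ⟨Or.inr hj, hji⟩
    · unfold rnk17
      congr 1
      ext j
      simp only [Finset.mem_filter, hu]
      exact ⟨fun h => ⟨⟨h.1, lt_of_le_of_lt h.2 him⟩, h.2⟩, fun h => ⟨h.1.1, h.2⟩⟩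
  -- ranks of elements not below m
  have hrv : ∀ i ∈ t, ¬ i < m → rnk17 (insert m t) i = rnk17 t i + 1 := by
    intro i hit him
    have hne : i ≠ m := fun h => hm (h ▸ hit)
    have hmi : m ≤ i := le_of_lt (lt_of_le_of_ne (le_of_not_gt him) hne.symm)
    unfold rnk17
    have hnm : m ∉ t.filter (· ≤ i) := by simp only [Finset.mem_filter]; tauto
    rw [Finset.filter_insert, if_pos hmi, Finset.card_insert_of_notMem hnm]
  -- split products
  have split : ∀ g : α → ℕ → ℝ, (∀ i ∈ t, ¬ i < m → g i (rnk17 (insert m t) i) = g i (rnk17 t i + 1)) → True := fun _ _ => trivial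
  rw [Finset.prod_insert hm, hrm]
  rw [← Finset.prod_filter_mul_prod_filter_not t (· < m) (fun i => x i ^ ℓ (rnk17 t i + 1)),
      ← Finset.prod_filter_mul_prod_filter_not t (· < m) (fun i => x i ^ ℓ (rnk17 (insert m t) i))]
  have e1 : ∏ i ∈ t.filter (· < m), x i ^ ℓ (rnk17 t i + 1)
      = ∏ i ∈ u, x i ^ ℓ (rnk17 u i + 1) :=
    Finset.prod_congr hu.symm (fun i hi => by rw [(hru i (hu ▸ hi)).2])
  have e2 : ∏ i ∈ t.filter (· < m), x i ^ ℓ (rnk17 (insert m t) i)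
      = ∏ i ∈ u, x i ^ ℓ (rnk17 u i) :=
    Finset.prod_congr hu.symm (fun i hi => by rw [(hru i (hu ▸ hi)).1])
  have e3 : ∏ i ∈ t.filter (fun i => ¬ i < m), x i ^ ℓ (rnk17 (insert m t) i)
      = ∏ i ∈ t.filter (fun i => ¬ i < m), x i ^ ℓ (rnk17 t i + 1) := by
    apply Finset.prod_congr rfl
    intro i hi
    rw [Finset.mem_filter] at hi
    rw [hrv i hi.1 hi.2]
  rw [e1, e2, e3]
  set V := ∏ i ∈ t.filter (fun i => ¬ i < m), x i ^ ℓ (rnk17 t i + 1) with hV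
  have hV0 : 0 ≤ V := by
    apply Finset.prod_nonneg
    intro i hi
    exact pow_nonneg (h0 i (Finset.mem_filter.1 hi).1) _
  have key := rank_bound17 ℓ hℓ x (x m) u
    (fun i hi => h0 i (Finset.mem_filter.1 hi).1)
    (fun i hi => hle i (Finset.mem_filter.1 hi).1 (by simpa using (Finset.mem_filter.1 hi).2))
  calc x m ^ ℓ 1 * ((∏ i ∈ u, x i ^ ℓ (rnk17 u i + 1)) * V)
      = (x m ^ ℓ 1 * ∏ i ∈ u, x i ^ ℓ (rnk17 u i + 1)) * V := by ring
    _ ≤ (x m ^ ℓ (u.card + 1) * ∏ i ∈ u, x i ^ ℓ (rnk17 u i)) * V :=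
        mul_le_mul_of_nonneg_right key hV0
    _ = x m ^ ℓ (u.card + 1) * ((∏ i ∈ u, x i ^ ℓ (rnk17 u i)) * V) := by ring

lemma sum_tuples17 {α : Type*} [LinearOrder α] [Fintype α] (k : ℕ)
    (P : α → Prop) [DecidablePred P] (F : α → ℕ → ℝ) :
    ∑ e ∈ (Finset.univ : Finset (Fin k → α)).filter
        (fun e => (∀ a b : Fin k, a < b → e a < e b) ∧ ∀ j, P (e j)),
      ∏ j : Fin k, F (e j) ((j : ℕ) + 1) =
    ∑ s ∈ (Finset.univ : Finset (Finset α)).filter (fun s => s.card = k ∧ ∀ i ∈ s, P i),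
      ∏ i ∈ s, F i (rnk17 s i) := by
  classical
  have hcard : ∀ (e : Fin k → α), StrictMono e → (Finset.image e Finset.univ).card = k := by
    intro e he
    rw [Finset.card_image_of_injective _ he.injective, Finset.card_univ, Fintype.card_fin]
  refine Finset.sum_bij' (fun e _ => Finset.image e Finset.univ)
    (fun s hs => fun a => s.orderEmbOfFin (Finset.mem_filter.1 hs).2.1 a) ?_ ?_ ?_ ?_ ?_
  · intro e he
    rw [Finset.mem_filter] at he ⊢
    obtain ⟨_, hmono, hP⟩ := he
    refine ⟨Finset.mem_univ _, hcard e hmono, ?_⟩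
    intro i hi
    obtain ⟨a, _, rfl⟩ := Finset.mem_image.1 hi
    exact hP a
  · intro s hs
    rw [Finset.mem_filter] at hs ⊢
    refine ⟨Finset.mem_univ _, fun a b hab => (s.orderEmbOfFin hs.2.1).strictMono hab, ?_⟩
    intro j
    exact hs.2.2 _ (Finset.orderEmbOfFin_mem s hs.2.1 j)
  · intro e he
    rw [Finset.mem_filter] at he
    exact (Finset.orderEmbOfFin_unique (hcard e he.2.1)
      (fun a => Finset.mem_image_of_mem e (Finset.mem_univ a)) he.2.1).symm
  · intro s hs
    rw [Finset.mem_filter] at hs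
    ext i
    simp only [Finset.mem_image, Finset.mem_univ, true_and]
    constructor
    · rintro ⟨a, rfl⟩; exact Finset.orderEmbOfFin_mem s hs.2.1 a
    · intro hi
      have hr := Finset.range_orderEmbOfFin s hs.2.1
      have : i ∈ Set.range (s.orderEmbOfFin hs.2.1) := by rw [hr]; exact hi
      obtain ⟨a, ha⟩ := this
      exact ⟨a, ha⟩
  · intro e he
    rw [Finset.mem_filter] at he
    have hmono : StrictMono e := he.2.1
    rw [Finset.prod_image (fun a _ b _ h => hmono.injective h)]
    apply Finset.prod_congr rfl
    intro j _
    congr 1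
    have hfe : (Finset.image e Finset.univ).filter (· ≤ e j)
        = Finset.image e (Finset.univ.filter (· ≤ j)) := by
      ext i
      simp only [Finset.mem_filter, Finset.mem_image, Finset.mem_univ, true_and]
      constructor
      · rintro ⟨⟨a, rfl⟩, hle⟩
        exact ⟨a, (hmono.le_iff_le).1 hle, rfl⟩
      · rintro ⟨a, haj, rfl⟩
        exact ⟨⟨a, rfl⟩, hmono.monotone haj⟩
    unfold rnk17
    rw [hfe, Finset.card_image_of_injective _ hmono.injective]
    have : Finset.univ.filter (· ≤ j) = Finset.Iic j := by ext a; simp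
    rw [this, Fin.card_Iic]

def mch17 {α : Type*} [LinearOrder α] [DecidableEq α] (R : Finset α) (d : α) (t : Finset α) : α :=
  if h : (R \ t).Nonempty then (R \ t).max' h else d

lemma mch17_mem {α : Type*} [LinearOrder α] [DecidableEq α] {R t : Finset α} (d : α)
    (h : (R \ t).Nonempty) : mch17 R d t ∈ R \ t := by
  unfold mch17
  rw [dif_pos h]
  exact (R \ t).max'_mem h

lemma setsum_bound17 (k N : ℕ) (hk : 1 ≤ k) (hN : k + 1 ≤ N)
    (x : Fin (N + 1) → ℝ)
    (hx0 : ∀ i : Fin (N + 1), 2 ≤ (i : ℕ) → 0 ≤ x i)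
    (hmono : ∀ i j : Fin (N + 1), 2 ≤ (i : ℕ) → i ≤ j → x i ≤ x j)
    (ℓ : ℕ → ℕ) (hℓmono : Monotone ℓ) :
    1 / (k : ℝ) * x ⟨N - k + 1, by have := hN; omega⟩ ^ ℓ 1 *
        ∑ t ∈ (Finset.univ : Finset (Finset (Fin (N + 1)))).filter
          (fun t => t.card = k - 1 ∧ ∀ i : Fin (N + 1), i ∈ t → 2 ≤ (i : ℕ)),
          ∏ i ∈ t, x i ^ ℓ (rnk17 t i + 1) ≤
      ∑ s ∈ (Finset.univ : Finset (Finset (Fin (N + 1)))).filter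
          (fun s => s.card = k ∧ ∀ i : Fin (N + 1), i ∈ s → 2 ≤ (i : ℕ)),
        ∏ i ∈ s, x i ^ ℓ (rnk17 s i) := by
  classical
  set c : Fin (N + 1) := ⟨N - k + 1, by omega⟩ with hcdef
  have hc2 : 2 ≤ (c : ℕ) := by simp only [hcdef]; omega
  set top : Fin (N + 1) := ⟨N, by omega⟩ with htop
  set R : Finset (Fin (N + 1)) := Finset.Icc c top with hR
  have hRcard : R.card = k := by
    rw [hR, Fin.card_Icc]
    simp only [hcdef, htop]
    omega
  set Sk := (Finset.univ : Finset (Finset (Fin (N + 1)))).filter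
      (fun s => s.card = k ∧ ∀ i : Fin (N + 1), i ∈ s → 2 ≤ (i : ℕ)) with hSk
  set Sk' := (Finset.univ : Finset (Finset (Fin (N + 1)))).filter
      (fun t => t.card = k - 1 ∧ ∀ i : Fin (N + 1), i ∈ t → 2 ≤ (i : ℕ)) with hSk'
  have hmem : ∀ t ∈ Sk', mch17 R top t ∈ R ∧ mch17 R top t ∉ t := by
    intro t ht
    rw [hSk', Finset.mem_filter] at ht
    have hne : (R \ t).Nonempty := by
      rw [Finset.sdiff_nonempty]
      intro hsub
      have := Finset.card_le_card hsub
      rw [hRcard, ht.2.1] at this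
      omega
    have h := mch17_mem top hne
    rw [Finset.mem_sdiff] at h
    exact h
  have hm2 : ∀ t ∈ Sk', 2 ≤ ((mch17 R top t : Fin (N + 1)) : ℕ) ∧ c ≤ mch17 R top t := by
    intro t ht
    have h := (hmem t ht).1
    rw [hR, Finset.mem_Icc] at h
    exact ⟨le_trans hc2 h.1, h.1⟩
  have hmaps : ∀ t ∈ Sk', insert (mch17 R top t) t ∈ Sk := by
    intro t ht
    have hmm := hmem t ht
    have h2 := hm2 t ht
    rw [hSk', Finset.mem_filter] at ht
    rw [hSk, Finset.mem_filter]
    refine ⟨Finset.mem_univ _, ?_, ?_⟩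
    · rw [Finset.card_insert_of_notMem hmm.2, ht.2.1]
      omega
    · intro i hi
      rw [Finset.mem_insert] at hi
      rcases hi with rfl | hi
      · exact h2.1
      · exact ht.2.2 i hi
  have hG0nonneg : ∀ s ∈ Sk, 0 ≤ ∏ i ∈ s, x i ^ ℓ (rnk17 s i) := by
    intro s hs
    rw [hSk, Finset.mem_filter] at hs
    exact Finset.prod_nonneg fun i hi => pow_nonneg (hx0 i (hs.2.2 i hi)) _
  -- pointwise bound
  have step1 : ∀ t ∈ Sk',
      x c ^ ℓ 1 * ∏ i ∈ t, x i ^ ℓ (rnk17 t i + 1) ≤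
        ∏ i ∈ insert (mch17 R top t) t, x i ^ ℓ (rnk17 (insert (mch17 R top t) t) i) := by
    intro t ht
    have hmm := hmem t ht
    have h2 := hm2 t ht
    rw [hSk', Finset.mem_filter] at ht
    have hxc : 0 ≤ x c := hx0 c hc2
    have hxm : x c ≤ x (mch17 R top t) := hmono c _ hc2 h2.2
    have hG1n : 0 ≤ ∏ i ∈ t, x i ^ ℓ (rnk17 t i + 1) :=
      Finset.prod_nonneg fun i hi => pow_nonneg (hx0 i (ht.2.2 i hi)) _
    calc x c ^ ℓ 1 * ∏ i ∈ t, x i ^ ℓ (rnk17 t i + 1)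
        ≤ x (mch17 R top t) ^ ℓ 1 * ∏ i ∈ t, x i ^ ℓ (rnk17 t i + 1) :=
          mul_le_mul_of_nonneg_right (pow_le_pow_left₀ hxc hxm _) hG1n
      _ ≤ ∏ i ∈ insert (mch17 R top t) t, x i ^ ℓ (rnk17 (insert (mch17 R top t) t) i) :=
          insert_bound17 ℓ hℓmono x t (mch17 R top t) hmm.2
            (fun i hi => hx0 i (ht.2.2 i hi)) (hx0 _ h2.1)
            (fun i hi hlt => hmono i (mch17 R top t) (ht.2.2 i hi) (le_of_lt hlt))
  -- fiber counting
  have step2 : ∑ t ∈ Sk',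
      (∏ i ∈ insert (mch17 R top t) t, x i ^ ℓ (rnk17 (insert (mch17 R top t) t) i)) ≤
      (k : ℝ) * ∑ s ∈ Sk, ∏ i ∈ s, x i ^ ℓ (rnk17 s i) := by
    rw [← Finset.sum_fiberwise_of_maps_to hmaps
      (fun t => ∏ i ∈ insert (mch17 R top t) t, x i ^ ℓ (rnk17 (insert (mch17 R top t) t) i)),
      Finset.mul_sum]
    apply Finset.sum_le_sum
    intro s hs
    have hfibcard : (Sk'.filter (fun t => insert (mch17 R top t) t = s)).card ≤ k := by
      have hinj : Set.InjOn (mch17 R top)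
          (Sk'.filter (fun t => insert (mch17 R top t) t = s)) := by
        intro t1 h1 t2 h2 heq
        simp only [Finset.coe_filter, Set.mem_setOf_eq] at h1 h2
        have e1 : t1 = s.erase (mch17 R top t1) := by
          rw [← h1.2, Finset.erase_insert (hmem t1 h1.1).2]
        have e2 : t2 = s.erase (mch17 R top t2) := by
          rw [← h2.2, Finset.erase_insert (hmem t2 h2.1).2]
        rw [e1, e2, heq]
      have hmapsm : ∀ t ∈ Sk'.filter (fun t => insert (mch17 R top t) t = s),
          mch17 R top t ∈ s := by
        intro t ht
        rw [Finset.mem_filter] at ht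
        rw [← ht.2]
        exact Finset.mem_insert_self _ _
      have hcle := Finset.card_le_card_of_injOn (mch17 R top) hmapsm hinj
      rw [hSk, Finset.mem_filter] at hs
      omega
    calc ∑ t ∈ Sk'.filter (fun t => insert (mch17 R top t) t = s),
          ∏ i ∈ insert (mch17 R top t) t, x i ^ ℓ (rnk17 (insert (mch17 R top t) t) i)
        = ∑ t ∈ Sk'.filter (fun t => insert (mch17 R top t) t = s),
            ∏ i ∈ s, x i ^ ℓ (rnk17 s i) :=
          Finset.sum_congr rfl fun t ht => by rw [(Finset.mem_filter.1 ht).2]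
      _ = ((Sk'.filter (fun t => insert (mch17 R top t) t = s)).card : ℝ) *
            ∏ i ∈ s, x i ^ ℓ (rnk17 s i) := by
          rw [Finset.sum_const, nsmul_eq_mul]
      _ ≤ (k : ℝ) * ∏ i ∈ s, x i ^ ℓ (rnk17 s i) := by
          apply mul_le_mul_of_nonneg_right _ (hG0nonneg s hs)
          exact_mod_cast hfibcard
  have step0 : x c ^ ℓ 1 * ∑ t ∈ Sk', ∏ i ∈ t, x i ^ ℓ (rnk17 t i + 1) ≤
      ∑ t ∈ Sk', ∏ i ∈ insert (mch17 R top t) t, x i ^ ℓ (rnk17 (insert (mch17 R top t) t) i) := by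
    rw [Finset.mul_sum]
    exact Finset.sum_le_sum step1
  have hk0 : (0 : ℝ) < k := by exact_mod_cast hk
  have main : x c ^ ℓ 1 * ∑ t ∈ Sk', ∏ i ∈ t, x i ^ ℓ (rnk17 t i + 1) ≤
      (k : ℝ) * ∑ s ∈ Sk, ∏ i ∈ s, x i ^ ℓ (rnk17 s i) := le_trans step0 step2
  calc 1 / (k : ℝ) * x c ^ ℓ 1 * ∑ t ∈ Sk', ∏ i ∈ t, x i ^ ℓ (rnk17 t i + 1)
      = (x c ^ ℓ 1 * ∑ t ∈ Sk', ∏ i ∈ t, x i ^ ℓ (rnk17 t i + 1)) / k := by ring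
    _ ≤ ((k : ℝ) * ∑ s ∈ Sk, ∏ i ∈ s, x i ^ ℓ (rnk17 s i)) / k :=
        div_le_div_of_nonneg_right main hk0.le
    _ = ∑ s ∈ Sk, ∏ i ∈ s, x i ^ ℓ (rnk17 s i) := by field_simp

lemma sum_tuples17two {α : Type*} [LinearOrder α] [Fintype α] (k : ℕ)
    (P : α → Prop) [DecidablePred P] (F : α → ℕ → ℝ) :
    ∑ e ∈ (Finset.univ : Finset (Fin k → α)).filter
        (fun e => (∀ a b : Fin k, a < b → e a < e b) ∧ ∀ j, P (e j)),
      ∏ j : Fin k, F (e j) ((j : ℕ) + 2) =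
    ∑ s ∈ (Finset.univ : Finset (Finset α)).filter (fun s => s.card = k ∧ ∀ i ∈ s, P i),
      ∏ i ∈ s, F i (rnk17 s i + 1) := by
  rw [← sum_tuples17 k P (fun i n => F i (n + 1))]

set_option maxHeartbeats 2000000 in
theorem stmt_17 (k N : ℕ) (hk : 1 ≤ k) (hN : k + 1 ≤ N)
    (x : Fin (N + 1) → ℝ)
    (hx0 : ∀ i : Fin (N + 1), 2 ≤ (i : ℕ) → 0 ≤ x i)
    (hmono : ∀ i j : Fin (N + 1), 2 ≤ (i : ℕ) → i ≤ j → x i ≤ x j)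
    (ℓ : ℕ → ℕ) (hℓpos : ∀ j, 1 ≤ ℓ j) (hℓmono : Monotone ℓ) :
    (∑ e ∈ (Finset.univ : Finset (Fin k → Fin (N + 1))).filter
        (fun e => (∀ a b : Fin k, a < b → e a < e b) ∧ ∀ j, 2 ≤ ((e j : Fin (N + 1)) : ℕ)),
      ∏ j : Fin k, x (e j) ^ ℓ ((j : ℕ) + 1)) ≥
      (1 / (k : ℝ)) * x ⟨N - k + 1, by omega⟩ ^ ℓ 1 *
        ∑ e ∈ (Finset.univ : Finset (Fin (k - 1) → Fin (N + 1))).filter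
            (fun e => (∀ a b : Fin (k - 1), a < b → e a < e b) ∧
              ∀ j, 2 ≤ ((e j : Fin (N + 1)) : ℕ)),
          ∏ j : Fin (k - 1), x (e j) ^ ℓ ((j : ℕ) + 2) := by
  rw [ge_iff_le,
    sum_tuples17 (α := Fin (N + 1)) k (fun i => 2 ≤ (i : ℕ)) (fun i n => x i ^ ℓ n),
    sum_tuples17two (α := Fin (N + 1)) (k - 1) (fun i => 2 ≤ (i : ℕ)) (fun i n => x i ^ ℓ n)]
  have h := setsum_bound17 k N hk hN x hx0 hmono ℓ hℓmono
  convert h using 4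
end
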